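/- arXiv:math/0405311 — 7 statements merged into one kernel-verified Lean document; each statement's English description precedes it below -/
import Mathlib

section
/- Let 𝒞 be a family of subrings of C*(X) for a topological space X, let R be the subring generated by the union of 𝒞, and let C be the uniform closure of R. If f ∈ C satisfies f''A = {1} and f''B = {0} for sets A, B ⊆ X, then there is a finite subfamily ℱ ⊆ 𝒞 and a function g in the subring generated by ∪ℱ such that g(x) ≥ 2/3 for x ∈ A and g(x) ≤ 1/3 for x ∈ B. -/
lemma aux_mono {R : Type*} [Ring R] {F1 F2 : Set (Subring R)} (h : F1 ⊆ F2) :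
    (⋃ S ∈ F1, (S : Set R)) ⊆ ⋃ S ∈ F2, (S : Set R) :=
  Set.biUnion_subset_biUnion_left h

lemma aux_finite {R : Type*} [Ring R] (𝒞 : Set (Subring R)) {g : R}
    (hg : g ∈ Subring.closure (⋃ S ∈ 𝒞, (S : Set R))) :
    ∃ ℱ ⊆ 𝒞, ℱ.Finite ∧ g ∈ Subring.closure (⋃ S ∈ ℱ, (S : Set R)) := by
  induction hg using Subring.closure_induction with
  | mem x hx =>
    simp only [Set.mem_iUnion] at hx
    obtain ⟨S, hS, hxS⟩ := hx
    exact ⟨{S}, by simpa using hS, Set.finite_singleton S,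
      Subring.subset_closure (by simp [hxS])⟩
  | zero => exact ⟨∅, by simp, Set.finite_empty, Subring.zero_mem _⟩
  | one => exact ⟨∅, by simp, Set.finite_empty, Subring.one_mem _⟩
  | add x y _ _ hx hy =>
    obtain ⟨F1, h1, hf1, hx1⟩ := hx
    obtain ⟨F2, h2, hf2, hy2⟩ := hy
    refine ⟨F1 ∪ F2, Set.union_subset h1 h2, hf1.union hf2, Subring.add_mem _ ?_ ?_⟩
    · exact Subring.closure_mono (aux_mono Set.subset_union_left) hx1
    · exact Subring.closure_mono (aux_mono Set.subset_union_right) hy2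
  | mul x y _ _ hx hy =>
    obtain ⟨F1, h1, hf1, hx1⟩ := hx
    obtain ⟨F2, h2, hf2, hy2⟩ := hy
    refine ⟨F1 ∪ F2, Set.union_subset h1 h2, hf1.union hf2, Subring.mul_mem _ ?_ ?_⟩
    · exact Subring.closure_mono (aux_mono Set.subset_union_left) hx1
    · exact Subring.closure_mono (aux_mono Set.subset_union_right) hy2
  | neg x _ hx =>
    obtain ⟨F1, h1, hf1, hx1⟩ := hx
    exact ⟨F1, h1, hf1, Subring.neg_mem _ hx1⟩

/-- If `𝒞` is a family of subrings of `C*(X)`, `R` the subring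
generated by `⋃ 𝒞` and `C` its uniform closure, and `f ∈ C` satisfies
`f '' A = {1}` and `f '' B = {0}`, then there is a finite `ℱ ⊆ 𝒞` and a `g`
in the subring generated by `⋃ ℱ` with `g ≥ 2/3` on `A` and `g ≤ 1/3` on `B`. -/
theorem stmt2 {X : Type*} [TopologicalSpace X]
    (𝒞 : Set (Subring (BoundedContinuousFunction X ℝ))) (A B : Set X)
    (f : BoundedContinuousFunction X ℝ)
    (hf : f ∈ closure ((Subring.closure
        (⋃ S ∈ 𝒞, (S : Set (BoundedContinuousFunction X ℝ)))) :
        Set (BoundedContinuousFunction X ℝ)))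
    (hA : (⇑f) '' A = {1}) (hB : (⇑f) '' B = {0}) :
    ∃ ℱ ⊆ 𝒞, ℱ.Finite ∧
      ∃ g ∈ Subring.closure (⋃ S ∈ ℱ, (S : Set (BoundedContinuousFunction X ℝ))),
        (∀ x ∈ A, 2/3 ≤ g x) ∧ (∀ x ∈ B, g x ≤ 1/3) := by
  rw [Metric.mem_closure_iff] at hf
  obtain ⟨g, hg, hdist⟩ := hf (1/3) (by norm_num)
  obtain ⟨ℱ, hsub, hfin, hmem⟩ := aux_finite 𝒞 hg
  refine ⟨ℱ, hsub, hfin, g, hmem, ?_, ?_⟩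
  · intro x hx
    have hfx : f x = 1 := by
      have : f x ∈ (⇑f) '' A := ⟨x, hx, rfl⟩
      rwa [hA, Set.mem_singleton_iff] at this
    have := BoundedContinuousFunction.dist_coe_le_dist (f := f) (g := g) x
    rw [Real.dist_eq, hfx] at this
    have := abs_le.mp (this.trans hdist.le)
    linarith [this.1]
  · intro x hx
    have hfx : f x = 0 := by
      have : f x ∈ (⇑f) '' B := ⟨x, hx, rfl⟩
      rwa [hB, Set.mem_singleton_iff] at this
    have := BoundedContinuousFunction.dist_coe_le_dist (f := f) (g := g) x
    rw [Real.dist_eq, hfx] at this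
    have := abs_le.mp (this.trans hdist.le)
    linarith [this.2]
end

section
/- There exists a family 𝒟 of metrics on [0,∞), each compatible with the usual topology, with |𝒟| equal to the dominating number 𝔡, such that for every pair of disjoint closed subsets A, B of [0,∞) there is a metric ρ ∈ 𝒟 with ρ(A,B) > 0. -/
/-- `d` is a metric on `α`. -/
def IsMetricOn {α : Type*} (d : α → α → ℝ) : Prop :=
  (∀ x y, d x y = 0 ↔ x = y) ∧ (∀ x y, d x y = d y x) ∧
    ∀ x y z, d x z ≤ d x y + d y z

/-- `d` induces the topology of `α`. -/
def InducesTopology {α : Type*} [TopologicalSpace α] (d : α → α → ℝ) : Prop :=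
  ∀ x : α, ∀ s : Set α, s ∈ nhds x ↔ ∃ ε > (0 : ℝ), ∀ y, d x y < ε → y ∈ s

/-- The dominating number `𝔡`. -/
noncomputable def dominatingNumber : Cardinal :=
  sInf {c : Cardinal | ∃ F : Set (ℕ → ℕ), Cardinal.mk F = c ∧
    ∀ g : ℕ → ℕ, ∃ f ∈ F, ∀ᶠ n in Filter.atTop, g n ≤ f n}

noncomputable section

/-- Partial sums of `f + 1`. -/
def Sf (f : ℕ → ℕ) (n : ℕ) : ℝ := ∑ k ∈ Finset.range n, ((f k : ℝ) + 1)

/-- Piecewise linear homeomorphism with slope `f n + 1` on `[n, n+1]`. -/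
def Hf (f : ℕ → ℕ) (x : ℝ) : ℝ :=
  Sf f ⌊x⌋₊ + (x - ⌊x⌋₊) * ((f ⌊x⌋₊ : ℝ) + 1)

lemma Sf_succ (f : ℕ → ℕ) (n : ℕ) : Sf f (n + 1) = Sf f n + ((f n : ℝ) + 1) :=
  Finset.sum_range_succ _ _

lemma Hf_nat (f : ℕ → ℕ) (n : ℕ) : Hf f n = Sf f n := by
  simp [Hf]

lemma Hf_zero (f : ℕ → ℕ) : Hf f 0 = 0 := by
  simpa [Sf] using Hf_nat f 0

/-- Formula for `Hf` on the closed segment `[n, n+1]`. -/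
lemma Hf_seg (f : ℕ → ℕ) (n : ℕ) {z : ℝ} (h1 : (n : ℝ) ≤ z) (h2 : z ≤ n + 1) :
    Hf f z = Sf f n + (z - n) * ((f n : ℝ) + 1) := by
  rcases eq_or_lt_of_le h2 with h2 | h2
  · subst h2
    have : ((n : ℝ) + 1) = ((n + 1 : ℕ) : ℝ) := by push_cast; ring
    rw [this, Hf_nat, Sf_succ]
    push_cast; ring
  · have hz0 : (0 : ℝ) ≤ z := le_trans (by positivity) h1
    have hfl : ⌊z⌋₊ = n := by
      rw [Nat.floor_eq_iff (by exact_mod_cast le_trans (Nat.cast_nonneg n) h1)]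
      exact ⟨h1, by push_cast; linarith⟩
    simp [Hf, hfl]

/-- Key lower bound: if the slope is at least `c` on every segment meeting
`[x, y]`, then `Hf` expands distances by at least `c`. -/
lemma Hf_key (f : ℕ → ℕ) (c : ℝ) (hc : 0 ≤ c) :
    ∀ m : ℕ, ∀ x y : ℝ, 0 ≤ x → x ≤ y → y ≤ (m : ℝ) + 1 →
      (∀ k ≤ m, ⌊x⌋₊ ≤ k → c ≤ (f k : ℝ) + 1) →
      c * (y - x) ≤ Hf f y - Hf f x := by
  intro m
  induction m with
  | zero =>
    intro x y hx hxy hy hk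
    have hx0 : ((0 : ℕ) : ℝ) ≤ x := by exact_mod_cast hx
    have hy1 : y ≤ ((0 : ℕ) : ℝ) + 1 := by exact_mod_cast hy
    rcases eq_or_lt_of_le (le_trans hxy hy1) with hxeq | hxlt
    · have hyx : y = x := le_antisymm (hxeq ▸ hy1) hxy
      rw [hyx]; simp
    · have hflx : ⌊x⌋₊ ≤ 0 := by
        have := (Nat.floor_lt hx).mpr (show x < ((1 : ℕ) : ℝ) by push_cast; push_cast at hxlt; linarith)
        omega
      have hc0 : c ≤ (f 0 : ℝ) + 1 := hk 0 le_rfl hflx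
      rw [Hf_seg f 0 (le_trans hx0 hxy) hy1, Hf_seg f 0 hx0 (le_trans hxy hy1)]
      nlinarith
  | succ m ih =>
    intro x y hx hxy hy hk
    rcases le_or_gt y ((m : ℝ) + 1) with hy' | hy'
    · exact ih x y hx hxy hy' fun k hkm hfk => hk k (le_trans hkm (Nat.le_succ m)) hfk
    have hy2 : y ≤ ((m + 1 : ℕ) : ℝ) + 1 := by push_cast at hy ⊢; linarith
    rcases le_or_gt ((m : ℝ) + 1) x with hx' | hx'
    · -- both x and y lie in [m+1, m+2]
      rcases eq_or_lt_of_le (le_trans hxy hy2) with hxeq | hxlt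
      · -- x = m + 2, hence y = x
        have hyx : y = x := le_antisymm (hxeq ▸ hy2) hxy
        rw [hyx]; simp
      · have hflx : ⌊x⌋₊ ≤ m + 1 := by
          have := (Nat.floor_lt hx).mpr (show x < ((m + 2 : ℕ) : ℝ) by push_cast; push_cast at hxlt; linarith)
          omega
        have hc1 : c ≤ (f (m + 1) : ℝ) + 1 := hk (m + 1) le_rfl hflx
        have h1 : ((m + 1 : ℕ) : ℝ) ≤ x := by push_cast; linarith
        rw [Hf_seg f (m + 1) (le_trans h1 hxy) hy2, Hf_seg f (m + 1) h1 (le_trans hxy hy2)]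
        nlinarith
    · -- x < m + 1 ≤ y : split at m + 1
      have hflx : ⌊x⌋₊ ≤ m := by
        have := (Nat.floor_lt hx).mpr (show x < ((m + 1 : ℕ) : ℝ) by push_cast; linarith)
        omega
      have hc1 : c ≤ (f (m + 1) : ℝ) + 1 := hk (m + 1) le_rfl (le_trans hflx (Nat.le_succ m))
      have ih1 : c * (((m : ℝ) + 1) - x) ≤ Hf f ((m : ℝ) + 1) - Hf f x :=
        ih x ((m : ℝ) + 1) hx hx'.le le_rfl
          fun k hkm hfk => hk k (le_trans hkm (Nat.le_succ m)) hfk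
      have h1 : ((m + 1 : ℕ) : ℝ) ≤ y := by push_cast; linarith
      have heq : Hf f y - Hf f ((m : ℝ) + 1) = (y - ((m : ℝ) + 1)) * ((f (m + 1) : ℝ) + 1) := by
        rw [Hf_seg f (m + 1) h1 hy2,
          show ((m : ℝ) + 1) = ((m + 1 : ℕ) : ℝ) by push_cast; ring, Hf_nat]
        push_cast; ring
      nlinarith

lemma Hf_expand (f : ℕ → ℕ) {x y : ℝ} (hx : 0 ≤ x) (hxy : x ≤ y) :
    y - x ≤ Hf f y - Hf f x := by
  have h := Hf_key f 1 zero_le_one ⌊y⌋₊ x y hx hxy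
    (Nat.lt_floor_add_one (R := ℝ) y).le
    (fun k _ _ => by have : (0:ℝ) ≤ (f k : ℝ) := Nat.cast_nonneg _; linarith)
  linarith

lemma Hf_strictMonoOn (f : ℕ → ℕ) : StrictMonoOn (Hf f) (Set.Ici (0:ℝ)) := by
  intro x hx y _ hxy
  have := Hf_expand f hx hxy.le
  linarith

lemma Hf_nonneg (f : ℕ → ℕ) {x : ℝ} (hx : 0 ≤ x) : 0 ≤ Hf f x := by
  have := Hf_expand f le_rfl hx
  rw [Hf_zero] at this; linarith

lemma Hf_abs_expand (f : ℕ → ℕ) {x y : ℝ} (hx : 0 ≤ x) (hy : 0 ≤ y) :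
    |x - y| ≤ |Hf f x - Hf f y| := by
  rcases le_total x y with h | h
  · have := Hf_expand f hx h
    rw [abs_sub_comm x y, abs_sub_comm (Hf f x) (Hf f y),
      abs_of_nonneg (by linarith), abs_of_nonneg (by linarith)]
    linarith
  · have := Hf_expand f hy h
    rw [abs_of_nonneg (by linarith), abs_of_nonneg (by linarith)]
    linarith

lemma Sf_ge (f : ℕ → ℕ) (n : ℕ) : (n : ℝ) ≤ Sf f n := by
  calc (n : ℝ) = ∑ _k ∈ Finset.range n, (1:ℝ) := by simp
  _ ≤ Sf f n := Finset.sum_le_sum fun k _ => by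
        have : (0:ℝ) ≤ (f k : ℝ) := Nat.cast_nonneg _; linarith

lemma Hf_surj (f : ℕ → ℕ) {t : ℝ} (ht : 0 ≤ t) : ∃ x, 0 ≤ x ∧ Hf f x = t := by
  have hex : ∃ n : ℕ, t < Sf f (n + 1) := by
    obtain ⟨n, hn⟩ := exists_nat_gt t
    exact ⟨n, lt_of_lt_of_le hn (le_trans (by exact_mod_cast Nat.le_succ n) (Sf_ge f (n+1)))⟩
  classical
  set n := Nat.find hex with hn
  have hup : t < Sf f (n + 1) := Nat.find_spec hex
  have hlo : Sf f n ≤ t := by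
    rcases Nat.eq_zero_or_pos n with h0 | h0
    · rw [h0]; simpa [Sf] using ht
    · have := Nat.find_min hex (m := n - 1) (by omega)
      push_neg at this
      have hn1 : n - 1 + 1 = n := by omega
      rwa [hn1] at this
  have hpos : (0:ℝ) < (f n : ℝ) + 1 := by positivity
  refine ⟨(n : ℝ) + (t - Sf f n) / ((f n : ℝ) + 1), ?_, ?_⟩
  · have : 0 ≤ (t - Sf f n) / ((f n : ℝ) + 1) := div_nonneg (by linarith) hpos.le
    have : (0:ℝ) ≤ (n:ℝ) := Nat.cast_nonneg n
    linarith
  · have h1 : (n : ℝ) ≤ (n : ℝ) + (t - Sf f n) / ((f n : ℝ) + 1) := by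
      have : 0 ≤ (t - Sf f n) / ((f n : ℝ) + 1) := div_nonneg (by linarith) hpos.le
      linarith
    have h2 : (n : ℝ) + (t - Sf f n) / ((f n : ℝ) + 1) ≤ (n : ℝ) + 1 := by
      have : t - Sf f n < (f n : ℝ) + 1 := by
        have := Sf_succ f n; linarith
      have := (div_le_one hpos).mpr this.le
      linarith
    rw [Hf_seg f n h1 h2]
    field_simp
    ring

/-- `Hf` as a map of the subtype `[0, ∞)`. -/
def Hmap (f : ℕ → ℕ) : Set.Ici (0:ℝ) → Set.Ici (0:ℝ) :=
  fun p => ⟨Hf f p, Hf_nonneg f p.2⟩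

lemma Hmap_strictMono (f : ℕ → ℕ) : StrictMono (Hmap f) := by
  intro p q hpq
  exact Hf_strictMonoOn f p.2 q.2 (by exact_mod_cast hpq)

lemma Hmap_surj (f : ℕ → ℕ) : Function.Surjective (Hmap f) := by
  intro q
  obtain ⟨x, hx, hxq⟩ := Hf_surj f q.2
  exact ⟨⟨x, hx⟩, Subtype.ext hxq⟩

/-- `Hf` as an order isomorphism, hence a homeomorphism, of `[0, ∞)`. -/
def Hiso (f : ℕ → ℕ) : Set.Ici (0:ℝ) ≃o Set.Ici (0:ℝ) :=
  StrictMono.orderIsoOfSurjective (Hmap f) (Hmap_strictMono f) (Hmap_surj f)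

/-- The metric associated to `f`. -/
def rho (f : ℕ → ℕ) : Set.Ici (0:ℝ) → Set.Ici (0:ℝ) → ℝ :=
  fun a b => |Hf f a - Hf f b|

lemma rho_metric (f : ℕ → ℕ) : IsMetricOn (rho f) := by
  refine ⟨fun x y => ?_, fun x y => abs_sub_comm _ _, fun x y z => abs_sub_le _ _ _⟩
  simp only [rho, abs_eq_zero, sub_eq_zero]
  constructor
  · intro h
    exact Subtype.ext ((Hf_strictMonoOn f).injOn x.2 y.2 h)
  · intro h; rw [h]

lemma rho_top (f : ℕ → ℕ) : InducesTopology (rho f) := by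
  intro x s
  have hφ : ⇑(Hiso f).toHomeomorph = Hmap f := by
    rw [OrderIso.coe_toHomeomorph]
    exact StrictMono.coe_orderIsoOfSurjective _ _ _
  have φcont : Continuous (Hmap f) := hφ ▸ (Hiso f).toHomeomorph.continuous
  have hdist : ∀ a b : Set.Ici (0:ℝ), dist (Hmap f a) (Hmap f b) = rho f a b := by
    intro a b
    rw [Subtype.dist_eq, Real.dist_eq]; rfl
  constructor
  · intro hs
    have himg : Hmap f '' s ∈ nhds (Hmap f x) := by
      rw [show Hmap f x = (Hiso f).toHomeomorph x from (congrFun hφ x).symm,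
        ← (Hiso f).toHomeomorph.map_nhds_eq x]
      have : Hmap f '' s = (Hiso f).toHomeomorph '' s := by rw [hφ]
      rw [this]
      exact Filter.image_mem_map hs
    obtain ⟨ε, hε, hball⟩ := Metric.mem_nhds_iff.mp himg
    refine ⟨ε, hε, fun y hy => ?_⟩
    have : Hmap f y ∈ Metric.ball (Hmap f x) ε := by
      rw [Metric.mem_ball, hdist, (rho_metric f).2.1]
      exact hy
    obtain ⟨y', hy's, hy'⟩ := hball this
    have : y' = y := (Hmap_strictMono f).injective hy'
    rwa [← this]
  · rintro ⟨ε, hε, hball⟩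
    have : (Hmap f) ⁻¹' (Metric.ball (Hmap f x) ε) ∈ nhds x :=
      φcont.continuousAt.preimage_mem_nhds (Metric.ball_mem_nhds _ hε)
    refine Filter.mem_of_superset this fun y hy => ?_
    apply hball
    rw [← (rho_metric f).2.1, ← hdist]
    exact hy

lemma rho_injective : Function.Injective rho := by
  intro f g h
  have hH : ∀ x : ℝ, 0 ≤ x → Hf f x = Hf g x := by
    intro x hx
    have := congrFun (congrFun h ⟨x, hx⟩) ⟨0, Set.self_mem_Ici⟩
    simp only [rho] at this
    rw [Hf_zero, Hf_zero, sub_zero, sub_zero,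
      abs_of_nonneg (Hf_nonneg f hx), abs_of_nonneg (Hf_nonneg g hx)] at this
    exact this
  have hS : ∀ n : ℕ, Sf f n = Sf g n := by
    intro n
    have := hH n (Nat.cast_nonneg n)
    rwa [Hf_nat, Hf_nat] at this
  funext n
  have h1 := hS (n + 1)
  have h2 := hS n
  rw [Sf_succ, Sf_succ, h2] at h1
  have : (f n : ℝ) = (g n : ℝ) := by linarith
  exact_mod_cast this

open Set in
/-- Given disjoint closed sets in `[0,∞)`, there is `g : ℕ → ℕ` such that any
`f` eventually dominating `g` yields a metric `rho f` separating them. -/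
lemma separation (A B : Set (Set.Ici (0:ℝ))) (hA : IsClosed A) (hB : IsClosed B)
    (hAB : Disjoint A B) :
    ∃ g : ℕ → ℕ, ∀ f : ℕ → ℕ, (∀ᶠ n in Filter.atTop, g n ≤ f n) →
      ∃ ε > (0:ℝ), ∀ a ∈ A, ∀ b ∈ B, ε ≤ rho f a b := by
  classical
  set A' : Set ℝ := Subtype.val '' A with hA'
  set B' : Set ℝ := Subtype.val '' B with hB'
  have hA'c : IsClosed A' := (isClosed_Ici.isClosedEmbedding_subtypeVal).isClosedMap _ hA
  have hB'c : IsClosed B' := (isClosed_Ici.isClosedEmbedding_subtypeVal).isClosedMap _ hB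
  have hAB' : Disjoint A' B' := Set.disjoint_image_of_injective Subtype.val_injective hAB
  have hdelta : ∀ n : ℕ, ∃ δ : ℝ, 0 < δ ∧ ∀ a ∈ A' ∩ Icc (n:ℝ) (n+1),
      ∀ b ∈ B' ∩ Icc ((n:ℝ)-1) (n+2), δ ≤ |a - b| := by
    intro n
    have hcomp : IsCompact (A' ∩ Icc (n:ℝ) (n+1)) :=
      isCompact_Icc.inter_left hA'c
    have hcl : IsClosed (B' ∩ Icc ((n:ℝ)-1) (n+2)) :=
      hB'c.inter isClosed_Icc
    have hd : Disjoint (A' ∩ Icc (n:ℝ) (n+1)) (B' ∩ Icc ((n:ℝ)-1) (n+2)) :=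
      Disjoint.mono Set.inter_subset_left Set.inter_subset_left hAB'
    obtain ⟨δ, hδ0, hδdisj⟩ := hd.exists_thickenings hcomp hcl
    refine ⟨δ, hδ0, fun a ha b hb => ?_⟩
    by_contra hcon
    push_neg at hcon
    have hb1 : b ∈ Metric.thickening δ (A' ∩ Icc (n:ℝ) (n+1)) :=
      Metric.mem_thickening_iff.mpr ⟨a, ha, by rwa [Real.dist_eq, abs_sub_comm]⟩
    have hb2 : b ∈ Metric.thickening δ (B' ∩ Icc ((n:ℝ)-1) (n+2)) :=
      Metric.self_subset_thickening hδ0 _ hb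
    exact (Set.disjoint_left.mp hδdisj hb1) hb2
  choose δ hδ0 hδ using hdelta
  set g : ℕ → ℕ := fun n => ⌈1 / δ n⌉₊ with hg
  refine ⟨fun n => max (max (g (n-1)) (g n)) (g (n+1)), fun f hf => ?_⟩
  obtain ⟨N, hN⟩ := Filter.eventually_atTop.mp hf
  set ε₀ : ℝ := (Finset.range (N+2)).inf' ⟨0, by simp⟩ δ with hε₀
  have hε₀pos : 0 < ε₀ := by
    rw [hε₀]
    exact (Finset.lt_inf'_iff _).2 fun n _ => hδ0 n
  refine ⟨min 1 ε₀, lt_min one_pos hε₀pos, fun a ha b hb => ?_⟩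
  set x : ℝ := (a : ℝ) with hxdef
  set y : ℝ := (b : ℝ) with hydef
  have hx0 : 0 ≤ x := a.2
  have hy0 : 0 ≤ y := b.2
  have hrho : rho f a b = |Hf f x - Hf f y| := rfl
  rw [hrho]
  rcases le_or_gt 1 |x - y| with hfar | hnear
  · have := Hf_abs_expand f hx0 hy0
    have h1 : min 1 ε₀ ≤ 1 := min_le_left _ _
    linarith
  · set n : ℕ := ⌊x⌋₊ with hn
    have hxlo : (n : ℝ) ≤ x := Nat.floor_le hx0
    have hxhi : x < (n : ℝ) + 1 := Nat.lt_floor_add_one x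
    have habs := abs_lt.mp hnear
    have hymem : y ∈ B' ∩ Icc ((n:ℝ)-1) (n+2) := by
      refine ⟨Set.mem_image_of_mem _ hb, ⟨by linarith, by linarith⟩⟩
    have hxmem : x ∈ A' ∩ Icc (n:ℝ) (n+1) :=
      ⟨Set.mem_image_of_mem _ ha, ⟨hxlo, hxhi.le⟩⟩
    have hδle : δ n ≤ |x - y| := hδ n x hxmem y hymem
    rcases le_or_gt n (N+1) with hsmall | hbig
    · have h1 : min 1 ε₀ ≤ ε₀ := min_le_right _ _
      have h2 : ε₀ ≤ δ n := Finset.inf'_le _ (Finset.mem_range.mpr (by omega))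
      have h3 := Hf_abs_expand f hx0 hy0
      linarith
    · -- n ≥ N + 2
      have hδn := hδ0 n
      set p : ℝ := min x y with hp
      set q : ℝ := max x y with hq
      have hp0 : 0 ≤ p := le_min hx0 hy0
      have hq2 : q ≤ ((n+1 : ℕ) : ℝ) + 1 := by
        push_cast
        rw [hq, max_le_iff]
        constructor <;> linarith
      have hplo : ((n - 1 : ℕ) : ℝ) ≤ p := by
        have hcast : ((n - 1 : ℕ) : ℝ) = (n : ℝ) - 1 := by
          have : 1 ≤ n := by omega
          push_cast [this]; ring
        rw [hcast, hp, le_min_iff]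
        constructor <;> linarith
      have hkey := Hf_key f (1 / δ n) (by positivity) (n+1) p q hp0 (min_le_max)
        hq2 ?_
      · have hqp : q - p = |x - y| := by
          rw [hp, hq, max_sub_min_eq_abs]
          exact abs_sub_comm y x
        have h1 : 1 = (1 / δ n) * (δ n) := by field_simp
        have h2 : (1 / δ n) * (δ n) ≤ (1 / δ n) * (q - p) := by
          apply mul_le_mul_of_nonneg_left _ (by positivity)
          rw [hqp]; exact hδle
        have h3 : Hf f p ≤ Hf f q := by
          have := Hf_expand f hp0 min_le_max
          linarith
        have h4 : |Hf f x - Hf f y| = Hf f q - Hf f p := by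
          rcases le_total x y with hxy | hxy
          · rw [hp, hq, min_eq_left hxy, max_eq_right hxy, abs_sub_comm,
              abs_of_nonneg (by simp only [hp, hq, min_eq_left hxy, max_eq_right hxy] at h3; linarith)]
          · rw [hp, hq, min_eq_right hxy, max_eq_left hxy,
              abs_of_nonneg (by simp only [hp, hq, min_eq_right hxy, max_eq_left hxy] at h3; linarith)]
        have h5 : min 1 ε₀ ≤ 1 := min_le_left _ _
        linarith
      · -- the slope bound
        intro k hk1 hk2
        have hplow : n - 1 ≤ ⌊p⌋₊ := Nat.le_floor hplo
        have hk3 : n - 1 ≤ k := le_trans hplow hk2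
        have hgk : g n ≤ max (max (g (k-1)) (g k)) (g (k+1)) := by
          have : k = n - 1 ∨ k = n ∨ k = n + 1 := by omega
          rcases this with h | h | h
          · have : k + 1 = n := by omega
            subst h
            exact le_trans (le_of_eq (by rw [this])) (le_max_right _ _)
          · subst h
            exact le_trans (le_max_right _ _) (le_max_left _ _)
          · have : k - 1 = n := by omega
            subst h
            exact le_trans (le_of_eq (by rw [this])) (le_trans (le_max_left _ _) (le_max_left _ _))
        have hfk : g n ≤ f k := le_trans hgk (hN k (by omega))
        have hceil : 1 / δ n ≤ (g n : ℝ) := Nat.le_ceil _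
        have : (g n : ℝ) ≤ (f k : ℝ) := by exact_mod_cast hfk
        linarith

end

/-- There is a family `𝒟` of compatible metrics on `[0,∞)` of
cardinality `𝔡` such that every pair of disjoint closed sets is at positive
distance with respect to some metric in `𝒟`. -/
theorem stmt3 :
    ∃ 𝒟 : Set (Set.Ici (0:ℝ) → Set.Ici (0:ℝ) → ℝ),
      Cardinal.mk 𝒟 = dominatingNumber ∧
      (∀ d ∈ 𝒟, IsMetricOn d ∧ InducesTopology d) ∧
      ∀ A B : Set (Set.Ici (0:ℝ)), IsClosed A → IsClosed B → Disjoint A B →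
        ∃ ρ ∈ 𝒟, ∃ ε > (0:ℝ), ∀ a ∈ A, ∀ b ∈ B, ε ≤ ρ a b := by
  classical
  have hne : {c : Cardinal | ∃ F : Set (ℕ → ℕ), Cardinal.mk F = c ∧
      ∀ g : ℕ → ℕ, ∃ f ∈ F, ∀ᶠ n in Filter.atTop, g n ≤ f n}.Nonempty :=
    ⟨Cardinal.mk ↥(Set.univ : Set (ℕ → ℕ)), Set.univ, rfl,
      fun g => ⟨g, Set.mem_univ g, Filter.Eventually.of_forall fun n => le_rfl⟩⟩
  have hmem : dominatingNumber ∈ {c : Cardinal | ∃ F : Set (ℕ → ℕ), Cardinal.mk F = c ∧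
      ∀ g : ℕ → ℕ, ∃ f ∈ F, ∀ᶠ n in Filter.atTop, g n ≤ f n} := csInf_mem hne
  obtain ⟨F, hFcard, hFdom⟩ := hmem
  refine ⟨rho '' F, ?_, ?_, ?_⟩
  · rw [Cardinal.mk_image_eq rho_injective, hFcard]
  · rintro d ⟨f, _, rfl⟩
    exact ⟨rho_metric f, rho_top f⟩
  · intro A B hA hB hAB
    obtain ⟨g, hg⟩ := separation A B hA hB hAB
    obtain ⟨f, hfF, hdom⟩ := hFdom g
    exact ⟨rho f, Set.mem_image_of_mem _ hfF, hg f hdom⟩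
end

section
/- Let κ < 𝔡 and let D be a family of metrics on [0,∞), each compatible with the usual topology, with |D| = κ. Then there exist disjoint closed sets A, B ⊆ [0,∞) such that for every finite nonempty F ⊆ D and every function φ in the uniform closure of the subring of C*([0,∞)) generated by ∪{U*_d : d ∈ F}, there are no reals a > b with φ(x) ≥ a on A and φ(x) ≤ b on B. -/
/-- The bounded functions on `[0,∞)` uniformly continuous with respect to `d`. -/
def UStar (d : Set.Ici (0:ℝ) → Set.Ici (0:ℝ) → ℝ) :
    Set (BoundedContinuousFunction (Set.Ici (0:ℝ)) ℝ) :=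
  {g | ∀ ε > (0:ℝ), ∃ δ > (0:ℝ), ∀ x y, d x y ≤ δ → |g x - g y| ≤ ε}

namespace Stmt5Helpers

open Filter Set

noncomputable section

abbrev X := Set.Ici (0:ℝ)
abbrev BCF := BoundedContinuousFunction X ℝ

def aPt (n : ℕ) : X := ⟨(n:ℝ), Set.mem_Ici.mpr (Nat.cast_nonneg n)⟩

def bPt (n j : ℕ) : X := ⟨(n:ℝ) + 1/((j:ℝ)+2), Set.mem_Ici.mpr (by positivity)⟩

lemma tendsto_bPt (n : ℕ) : Tendsto (fun j => bPt n j) atTop (nhds (aPt n)) := by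
  rw [tendsto_subtype_rng]
  have h2 : Tendsto (fun j : ℕ => ((j:ℝ)+2)) atTop atTop :=
    tendsto_atTop_add_const_right _ 2 tendsto_natCast_atTop_atTop
  have h1 := h2.inv_tendsto_atTop
  simpa [bPt, aPt, one_div] using (tendsto_const_nhds (x := (n:ℝ)) (f := atTop (α := ℕ))).add h1

lemma exists_k (d : X → X → ℝ) (hind : InducesTopology d) (n : ℕ) :
    ∃ k, ∀ j, k ≤ j → d (aPt n) (bPt n j) < (2:ℝ)⁻¹ ^ n := by
  have hball : {y : X | d (aPt n) y < (2:ℝ)⁻¹ ^ n} ∈ nhds (aPt n) :=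
    (hind (aPt n) _).mpr ⟨(2:ℝ)⁻¹ ^ n, by positivity, fun y hy => hy⟩
  exact eventually_atTop.mp ((tendsto_bPt n).eventually hball)

lemma metric_nonneg {d : X → X → ℝ} (hd : IsMetricOn d) (x y : X) : 0 ≤ d x y := by
  obtain ⟨h0, hs, ht⟩ := hd
  have h1 : d x x ≤ d x y + d y x := ht x y x
  rw [(h0 x x).mpr rfl, hs y x] at h1
  linarith

lemma isClosed_range_of_ge_nat (r : ℕ → ℝ) (hn : ∀ n : ℕ, (n:ℝ) ≤ r n) :
    IsClosed (Set.range r) := by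
  refine isClosed_of_closure_subset fun x hx => ?_
  have hfin : ((Set.range r) ∩ Metric.ball x 1).Finite := by
    have hsub : (Set.range r) ∩ Metric.ball x 1 ⊆ r '' (Set.Iio ⌈x+1⌉₊) := by
      rintro y ⟨⟨n, rfl⟩, hb⟩
      refine ⟨n, ?_, rfl⟩
      rw [Set.mem_Iio, Nat.lt_ceil]
      have hd : |x - r n| < 1 := by
        have h := Metric.mem_ball'.mp hb
        rwa [Real.dist_eq] at h
      have h2 : r n < x + 1 := by
        have := abs_lt.mp hd; linarith
      exact lt_of_le_of_lt (hn n) h2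
    exact ((Set.finite_Iio _).image r).subset hsub
  have hx' : x ∈ closure (Set.range r ∩ Metric.ball x 1) := by
    rw [mem_closure_iff] at hx ⊢
    intro O hO hxO
    obtain ⟨y, hy1, hy2⟩ := hx (O ∩ Metric.ball x 1) (hO.inter Metric.isOpen_ball)
      ⟨hxO, Metric.mem_ball_self one_pos⟩
    exact ⟨y, hy1.1, hy2, hy1.2⟩
  exact (hfin.isClosed.closure_subset hx').1

lemma isClosed_range_X (s : ℕ → X) (hn : ∀ n : ℕ, (n:ℝ) ≤ (s n : ℝ)) :
    IsClosed (Set.range s) := by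
  have hT := isClosed_range_of_ge_nat (fun n => (s n : ℝ)) hn
  have heq : Set.range s = Subtype.val ⁻¹' Set.range (fun n => (s n : ℝ)) := by
    ext x
    constructor
    · rintro ⟨n, rfl⟩; exact ⟨n, rfl⟩
    · rintro ⟨n, hx⟩; exact ⟨n, Subtype.ext hx⟩
  rw [heq]
  exact hT.preimage continuous_subtype_val

lemma aleph0_le_d : Cardinal.aleph0 ≤ dominatingNumber := by
  apply le_csInf
  · exact ⟨_, Set.univ, rfl, fun g => ⟨g, trivial, Filter.Eventually.of_forall fun n => le_rfl⟩⟩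
  rintro c ⟨F, rfl, hF⟩
  rw [Cardinal.aleph0_le_mk_iff]
  by_contra hfin
  have hFfin : F.Finite := Set.not_infinite.mp (by rwa [Set.infinite_coe_iff] at hfin)
  classical
  set g : ℕ → ℕ := fun n => hFfin.toFinset.sup (fun f => f n) + 1 with hg
  obtain ⟨f, hfF, hev⟩ := hF g
  obtain ⟨n, hn⟩ := hev.exists
  have : f n ≤ hFfin.toFinset.sup (fun f => f n) :=
    Finset.le_sup (f := fun f => f n) (hFfin.mem_toFinset.mpr hfF)
  exact Nat.not_succ_le_self _ (hn.trans this)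

lemma exists_escape {I : Type} (hI : Cardinal.mk I < dominatingNumber)
    (fam : I → ℕ → ℕ) : ∃ g : ℕ → ℕ, ∀ i, ∃ᶠ n in atTop, fam i n < g n := by
  by_contra h
  push_neg at h
  have hdom : dominatingNumber ≤ Cardinal.mk (Set.range fam) := by
    apply csInf_le'
    refine ⟨Set.range fam, rfl, fun g => ?_⟩
    obtain ⟨i, hi⟩ := h g
    exact ⟨fam i, Set.mem_range_self i, hi.mono fun n hn => by simpa using hn⟩
  exact absurd (hdom.trans Cardinal.mk_range_le) (not_le.mpr hI)

lemma mk_finset_lt {A : Type} (hA : Cardinal.mk A < dominatingNumber) :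
    Cardinal.mk (Finset A) < dominatingNumber := by
  rcases finite_or_infinite A with h | h
  · have : Fintype A := Fintype.ofFinite A
    exact lt_of_lt_of_le (Cardinal.lt_aleph0_of_finite _) aleph0_le_d
  · rwa [Cardinal.mk_finset_of_infinite]

def UC (ρ : X → X → ℝ) : Set BCF :=
  {φ | ∀ ε > (0:ℝ), ∃ δ > (0:ℝ), ∀ x y, ρ x y ≤ δ → |φ x - φ y| ≤ ε}

noncomputable def ucSubring (ρ : X → X → ℝ) : Subring BCF where
  carrier := UC ρ
  zero_mem' := fun ε hε => ⟨1, one_pos, fun x y _ => by simp [hε.le]⟩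
  one_mem' := fun ε hε => ⟨1, one_pos, fun x y _ => by simp [hε.le]⟩
  neg_mem' := by
    rintro φ hφ ε hε
    obtain ⟨δ, hδ, h⟩ := hφ ε hε
    refine ⟨δ, hδ, fun x y hxy => ?_⟩
    have hh := h x y hxy
    simp only [BoundedContinuousFunction.coe_neg, Pi.neg_apply]
    rw [show -φ x - -φ y = -(φ x - φ y) from by ring, abs_neg]
    exact hh
  add_mem' := by
    rintro φ ψ hφ hψ ε hε
    obtain ⟨δ1, hδ1, h1⟩ := hφ (ε/2) (by linarith)
    obtain ⟨δ2, hδ2, h2⟩ := hψ (ε/2) (by linarith)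
    refine ⟨min δ1 δ2, lt_min hδ1 hδ2, fun x y hxy => ?_⟩
    have e1 := h1 x y (hxy.trans (min_le_left _ _))
    have e2 := h2 x y (hxy.trans (min_le_right _ _))
    calc |(φ + ψ) x - (φ + ψ) y| = |(φ x - φ y) + (ψ x - ψ y)| := by
          simp; ring_nf
      _ ≤ |φ x - φ y| + |ψ x - ψ y| := abs_add_le _ _
      _ ≤ ε := by linarith
  mul_mem' := by
    rintro φ ψ hφ hψ ε hε
    set M : ℝ := ‖φ‖ + ‖ψ‖ + 1 with hM
    have hM0 : 0 < M := by positivity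
    obtain ⟨δ1, hδ1, h1⟩ := hφ (ε/M) (by positivity)
    obtain ⟨δ2, hδ2, h2⟩ := hψ (ε/M) (by positivity)
    refine ⟨min δ1 δ2, lt_min hδ1 hδ2, fun x y hxy => ?_⟩
    have e1 := h1 x y (hxy.trans (min_le_left _ _))
    have e2 := h2 x y (hxy.trans (min_le_right _ _))
    have hbφ : |φ x| ≤ ‖φ‖ := φ.norm_coe_le_norm x
    have hbψ : |ψ y| ≤ ‖ψ‖ := ψ.norm_coe_le_norm y
    have key : |(φ * ψ) x - (φ * ψ) y| ≤ |φ x| * |ψ x - ψ y| + |ψ y| * |φ x - φ y| := by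
      have : (φ * ψ) x - (φ * ψ) y = φ x * (ψ x - ψ y) + ψ y * (φ x - φ y) := by
        simp; ring
      rw [this]
      refine (abs_add_le _ _).trans ?_
      rw [abs_mul, abs_mul]
    have h2' : |φ x| * |ψ x - ψ y| ≤ ‖φ‖ * (ε/M) :=
      mul_le_mul hbφ e2 (abs_nonneg _) (norm_nonneg _)
    have h1' : |ψ y| * |φ x - φ y| ≤ ‖ψ‖ * (ε/M) :=
      mul_le_mul hbψ e1 (abs_nonneg _) (norm_nonneg _)
    have hfin : ‖φ‖ * (ε/M) + ‖ψ‖ * (ε/M) ≤ ε := by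
      have : (‖φ‖ + ‖ψ‖) * (ε/M) ≤ M * (ε/M) := by
        apply mul_le_mul_of_nonneg_right _ (by positivity)
        rw [hM]; linarith
      rw [mul_div_cancel₀ _ (ne_of_gt hM0)] at this
      linarith
    linarith [key, h1', h2']

lemma uc_of_mem_closure (ρ : X → X → ℝ) (φ : BCF) (hφ : φ ∈ closure (UC ρ)) :
    φ ∈ UC ρ := by
  intro ε hε
  obtain ⟨ψ, hψUC, hdist⟩ := Metric.mem_closure_iff.mp hφ (ε/3) (by linarith)
  obtain ⟨δ, hδ, h⟩ := hψUC (ε/3) (by linarith)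
  refine ⟨δ, hδ, fun x y hxy => ?_⟩
  have d1 : |φ x - ψ x| ≤ ε/3 := by
    have := BoundedContinuousFunction.dist_coe_le_dist (f := φ) (g := ψ) x
    rw [Real.dist_eq] at this; linarith
  have d2 : |φ y - ψ y| ≤ ε/3 := by
    have := BoundedContinuousFunction.dist_coe_le_dist (f := φ) (g := ψ) y
    rw [Real.dist_eq] at this; linarith
  have d3 := h x y hxy
  have d2' : |ψ y - φ y| ≤ ε/3 := by rwa [abs_sub_comm] at d2
  calc |φ x - φ y| = |(φ x - ψ x) + (ψ x - ψ y) + (ψ y - φ y)| := by ring_nf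
    _ ≤ |(φ x - ψ x) + (ψ x - ψ y)| + |ψ y - φ y| := abs_add_le _ _
    _ ≤ |φ x - ψ x| + |ψ x - ψ y| + |ψ y - φ y| := by
        have := abs_add_le (φ x - ψ x) (ψ x - ψ y); linarith
    _ ≤ ε := by linarith

end

end Stmt5Helpers

open Filter Set Stmt5Helpers

/-- If `κ < 𝔡` and `D` is a family of compatible metrics on
`[0,∞)` with `|D| = κ`, then there are disjoint closed sets `A`, `B` that no
function in the uniform closure of the ring generated by the `U*_d` for `d`
in a finite nonempty `F ⊆ D` can separate by levels `a > b`. -/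
theorem stmt5 (κ : Cardinal) (hκ : κ < dominatingNumber)
    (D : Set (Set.Ici (0:ℝ) → Set.Ici (0:ℝ) → ℝ))
    (hD : ∀ d ∈ D, IsMetricOn d ∧ InducesTopology d)
    (hcard : Cardinal.mk D = κ) :
    ∃ A B : Set (Set.Ici (0:ℝ)), IsClosed A ∧ IsClosed B ∧ Disjoint A B ∧
      ∀ F ⊆ D, F.Finite → F.Nonempty →
        ∀ φ ∈ closure ((Subring.closure (⋃ d ∈ F, UStar d)) :
            Set (BoundedContinuousFunction (Set.Ici (0:ℝ)) ℝ)),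
          ¬ ∃ a b : ℝ, b < a ∧ (∀ x ∈ A, a ≤ φ x) ∧ (∀ x ∈ B, φ x ≤ b) := by
  classical
  have hex : ∀ (d : ↥D) (n : ℕ), ∃ k, ∀ j, k ≤ j →
      (d : X → X → ℝ) (aPt n) (bPt n j) < (2:ℝ)⁻¹ ^ n :=
    fun d n => exists_k d.1 (hD d.1 d.2).2 n
  choose f hfspec using hex
  have hcard' : Cardinal.mk (Finset ↥D) < dominatingNumber :=
    mk_finset_lt (hcard ▸ hκ)
  obtain ⟨g, hg⟩ := exists_escape hcard' (fun S n => S.sup (fun d => f d n))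
  refine ⟨Set.range aPt, Set.range (fun n => bPt n (g n)), ?_, ?_, ?_, ?_⟩
  · exact isClosed_range_X aPt (fun n => le_refl _)
  · exact isClosed_range_X _ (fun n => le_add_of_nonneg_right (by positivity))
  · rw [Set.disjoint_left]
    rintro x ⟨n, rfl⟩ ⟨m, hm⟩
    have hval : (m:ℝ) + 1/((g m : ℝ)+2) = (n:ℝ) := congrArg Subtype.val hm
    have ht0 : 0 < 1/((g m : ℝ)+2) := by positivity
    have ht2 : 1/((g m : ℝ)+2) ≤ 1/2 := by
      apply one_div_le_one_div_of_le
      · norm_num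
      · have : (0:ℝ) ≤ (g m : ℝ) := Nat.cast_nonneg _
        linarith
    have hmn : m < n := by
      have : (m:ℝ) < (n:ℝ) := by linarith
      exact_mod_cast this
    have hmn' : (m:ℝ) + 1 ≤ (n:ℝ) := by exact_mod_cast Nat.succ_le_of_lt hmn
    linarith
  · intro F hFD hFfin hFne φ hφ
    rintro ⟨a, b, hba, hA, hB⟩
    set S : Finset ↥D := hFfin.toFinset.subtype (· ∈ D) with hSdef
    have hmemS : ∀ d (hd : d ∈ F), (⟨d, hFD hd⟩ : ↥D) ∈ S := fun d hd =>
      Finset.mem_subtype.mpr (hFfin.mem_toFinset.mpr hd)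
    set ρ : X → X → ℝ := fun x y => ∑ d ∈ S, (d : X → X → ℝ) x y with hρ
    have hsub : ((Subring.closure (⋃ d ∈ F, UStar d)) : Set BCF) ⊆ UC ρ := by
      have hle : Subring.closure (⋃ d ∈ F, UStar d) ≤ ucSubring ρ := by
        apply Subring.closure_le.mpr
        rintro ψ hψ
        simp only [Set.mem_iUnion] at hψ
        obtain ⟨d, hd, hψd⟩ := hψ
        intro ε hε
        obtain ⟨δ, hδ, h⟩ := hψd ε hε
        refine ⟨δ, hδ, fun x y hxy => ?_⟩
        refine h x y (le_trans ?_ hxy)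
        exact Finset.single_le_sum
          (f := fun d' : ↥D => (d' : X → X → ℝ) x y)
          (fun d' _ => metric_nonneg (hD d'.1 d'.2).1 x y) (hmemS d hd)
      exact fun x hx => hle hx
    have hUC : φ ∈ UC ρ := uc_of_mem_closure ρ φ (closure_mono hsub hφ)
    obtain ⟨δ, hδ, hδs⟩ := hUC ((a-b)/2) (by linarith)
    have htend : Tendsto (fun n : ℕ => (S.card : ℝ) * (2:ℝ)⁻¹ ^ n) atTop (nhds 0) := by
      have h0 := tendsto_pow_atTop_nhds_zero_of_lt_one
        (𝕜 := ℝ) (r := (2:ℝ)⁻¹) (by norm_num) (by norm_num)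
      simpa using h0.const_mul (S.card : ℝ)
    obtain ⟨N, hN⟩ := eventually_atTop.mp (htend.eventually_lt_const hδ)
    obtain ⟨n, hnN, hn⟩ := (frequently_atTop.mp (hg S)) N
    have hρbound : ρ (aPt n) (bPt n (g n)) ≤ δ := by
      have hsum : ρ (aPt n) (bPt n (g n)) ≤ ∑ _d ∈ S, (2:ℝ)⁻¹ ^ n := by
        apply Finset.sum_le_sum
        intro d hd
        exact (hfspec d n (g n) ((Finset.le_sup (f := fun d => f d n) hd).trans hn.le)).le
      rw [Finset.sum_const, nsmul_eq_mul] at hsum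
      exact hsum.trans (hN n hnN).le
    have hclose := hδs _ _ hρbound
    have hφa : a ≤ φ (aPt n) := hA _ ⟨n, rfl⟩
    have hφb : φ (bPt n (g n)) ≤ b := hB _ ⟨n, rfl⟩
    have h2 : a - b ≤ (a-b)/2 :=
      le_trans (le_trans (by linarith) (le_abs_self _)) hclose
    linarith
end

section
/- There exists a family D of metrics on ω of cardinality 𝔲, directed under the relation d₁ ⪯ d₂ (meaning the identity map (ω,d₂) → (ω,d₁) is uniformly continuous), such that for every B ⊆ ω there is a metric d ∈ D with d(B, ω∖B) > 0, yet for every single d ∈ D there exists B ⊆ ω with d(B, ω∖B) = 0. -/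
/-- `d₁ ⪯ d₂`: the identity map `(ω, d₂) → (ω, d₁)` is uniformly continuous. -/
def MetricLE {α : Type*} (d₁ d₂ : α → α → ℝ) : Prop :=
  ∀ ε > (0:ℝ), ∃ δ > (0:ℝ), ∀ x y, d₂ x y < δ → d₁ x y < ε

/-- The ultrafilter number `𝔲`: the least cardinality of a family of subsets
of `ω` generating a non-principal ultrafilter. -/
noncomputable def uNumber : Cardinal :=
  sInf {c : Cardinal | ∃ (𝒰 : Set (Set ℕ)) (U : Ultrafilter ℕ),
    Cardinal.mk 𝒰 = c ∧ (U : Filter ℕ) ≤ Filter.cofinite ∧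
    (∀ X ∈ 𝒰, X ∈ U) ∧ ∀ X ∈ U, ∃ Y ∈ 𝒰, Y ⊆ X}

noncomputable def fexp (x : ℕ) : ℝ := (2:ℝ)⁻¹ ^ x

lemma fexp_pos (x : ℕ) : 0 < fexp x := pow_pos (by norm_num) x

lemma fexp_le_one (x : ℕ) : fexp x ≤ 1 := pow_le_one₀ (by norm_num) (by norm_num)

lemma fexp_strictAnti : StrictAnti fexp := fun _ _ h =>
  pow_lt_pow_right_of_lt_one₀ (by norm_num) (by norm_num) h

lemma fexp_anti : Antitone fexp := fexp_strictAnti.antitone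

lemma fexp_injective : Function.Injective fexp := fexp_strictAnti.injective

lemma abs_fexp_sub_lt_one (x y : ℕ) : |fexp x - fexp y| < 1 := by
  have h1 := fexp_pos x; have h2 := fexp_pos y
  have h3 := fexp_le_one x; have h4 := fexp_le_one y
  rw [abs_sub_lt_iff]; constructor <;> linarith

open Classical in
noncomputable def dX (X : Set ℕ) (x y : ℕ) : ℝ :=
  if x = y then 0 else if x ∈ X ∧ y ∈ X then |fexp x - fexp y| else 1

lemma dX_self (X : Set ℕ) (x : ℕ) : dX X x x = 0 := by simp [dX]

lemma dX_of_mem {X : Set ℕ} {x y : ℕ} (hxy : x ≠ y) (hx : x ∈ X) (hy : y ∈ X) :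
    dX X x y = |fexp x - fexp y| := by
  simp [dX, hxy, hx, hy]

lemma dX_of_notMem {X : Set ℕ} {x y : ℕ} (hxy : x ≠ y) (h : ¬(x ∈ X ∧ y ∈ X)) :
    dX X x y = 1 := by
  simp only [dX, if_neg hxy, if_neg h]

lemma dX_nonneg (X : Set ℕ) (x y : ℕ) : 0 ≤ dX X x y := by
  unfold dX; split_ifs <;> [rfl; exact abs_nonneg _; norm_num]

lemma dX_le_one (X : Set ℕ) (x y : ℕ) : dX X x y ≤ 1 := by
  unfold dX; split_ifs <;> [norm_num; exact (abs_fexp_sub_lt_one x y).le; rfl]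

lemma dX_symm (X : Set ℕ) (x y : ℕ) : dX X x y = dX X y x := by
  unfold dX
  rcases eq_or_ne x y with h | h
  · simp [h]
  · rw [if_neg h, if_neg h.symm]
    by_cases hm : x ∈ X ∧ y ∈ X
    · rw [if_pos hm, if_pos ⟨hm.2, hm.1⟩, abs_sub_comm]
    · rw [if_neg hm, if_neg (fun hc => hm ⟨hc.2, hc.1⟩)]

lemma dX_eq_zero_iff (X : Set ℕ) (x y : ℕ) : dX X x y = 0 ↔ x = y := by
  constructor
  · intro h
    by_contra hxy
    by_cases hm : x ∈ X ∧ y ∈ X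
    · rw [dX_of_mem hxy hm.1 hm.2] at h
      exact hxy (fexp_injective (by linarith [abs_eq_zero.mp h]))
    · rw [dX_of_notMem hxy hm] at h; norm_num at h
  · rintro rfl; exact dX_self X x

lemma dX_triangle (X : Set ℕ) (x y z : ℕ) : dX X x z ≤ dX X x y + dX X y z := by
  rcases eq_or_ne x z with rfl | hxz
  · rw [dX_self]
    exact add_nonneg (dX_nonneg X x y) (dX_nonneg X y x)
  rcases eq_or_ne y x with rfl | hyx
  · rw [dX_self, zero_add]
  rcases eq_or_ne y z with rfl | hyz
  · rw [dX_self, add_zero, dX_symm]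
  by_cases hm : x ∈ X ∧ z ∈ X
  · by_cases hy : y ∈ X
    · rw [dX_of_mem hxz hm.1 hm.2, dX_of_mem (Ne.symm hyx) hm.1 hy,
        dX_of_mem hyz hy hm.2]
      exact abs_sub_le _ _ _
    · rw [dX_of_notMem (Ne.symm hyx) (fun h => hy h.2), dX_of_mem hxz hm.1 hm.2]
      have := dX_nonneg X y z
      have := abs_fexp_sub_lt_one x z
      linarith
  · rw [dX_of_notMem hxz hm]
    rcases not_and_or.mp hm with hx | hz
    · rw [dX_of_notMem (Ne.symm hyx) (fun h => hx h.1)]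
      have := dX_nonneg X y z
      linarith
    · rw [dX_of_notMem hyz (fun h => hz h.2)]
      have := dX_nonneg X x y
      linarith

lemma dX_isMetric (X : Set ℕ) : IsMetricOn (dX X) :=
  ⟨dX_eq_zero_iff X, dX_symm X, dX_triangle X⟩

lemma dX_metricLE {X Y : Set ℕ} (h : Y ⊆ X) : MetricLE (dX X) (dX Y) := by
  intro ε hε
  refine ⟨min ε 1, lt_min hε one_pos, fun x y hd => ?_⟩
  rcases eq_or_ne x y with rfl | hxy
  · rw [dX_self]; exact hε
  by_cases hm : x ∈ Y ∧ y ∈ Y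
  · rw [dX_of_mem hxy hm.1 hm.2] at hd
    rw [dX_of_mem hxy (h hm.1) (h hm.2)]
    exact lt_of_lt_of_le hd (min_le_left _ _)
  · rw [dX_of_notMem hxy hm] at hd
    exact absurd hd (not_lt.mpr (min_le_right _ _))

/-- If `dX X = dX Y` and `X` is infinite then `X ⊆ Y`. -/
lemma dX_subset_of_eq {X Y : Set ℕ} (hX : X.Infinite) (h : dX X = dX Y) : X ⊆ Y := by
  intro a ha
  obtain ⟨b, hb, hba⟩ := (hX.diff (Set.finite_singleton a)).nonempty
  simp only [Set.mem_singleton_iff] at hba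
  have hab : a ≠ b := fun e => hba e.symm
  have h1 : dX X a b < 1 := by
    rw [dX_of_mem hab ha hb]; exact abs_fexp_sub_lt_one a b
  rw [h] at h1
  by_contra haY
  rw [dX_of_notMem hab (fun hc => haY hc.1)] at h1
  exact lt_irrefl 1 h1

/-- There is a `⪯`-directed family `D` of metrics on `ω` of
cardinality `𝔲` such that every `B ⊆ ω` is at positive distance from its
complement for some `d ∈ D`, but no single `d ∈ D` works for all `B`. -/
theorem stmt11 :
    ∃ D : Set (ℕ → ℕ → ℝ), Cardinal.mk D = uNumber ∧
      (∀ d ∈ D, IsMetricOn d) ∧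
      (∀ d₁ ∈ D, ∀ d₂ ∈ D, ∃ d ∈ D, MetricLE d₁ d ∧ MetricLE d₂ d) ∧
      (∀ B : Set ℕ, ∃ d ∈ D, ∃ ε > (0:ℝ), ∀ x ∈ B, ∀ y ∉ B, ε ≤ d x y) ∧
      (∀ d ∈ D, ∃ B : Set ℕ, ∀ ε > (0:ℝ), ∃ x ∈ B, ∃ y ∉ B, d x y < ε) := by
  -- the defining set of `uNumber` is nonempty
  obtain ⟨U₀, hU₀⟩ := Ultrafilter.exists_le (Filter.cofinite : Filter ℕ)
  have hne : {c : Cardinal | ∃ (𝒰 : Set (Set ℕ)) (U : Ultrafilter ℕ),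
      Cardinal.mk 𝒰 = c ∧ (U : Filter ℕ) ≤ Filter.cofinite ∧
      (∀ X ∈ 𝒰, X ∈ U) ∧ ∀ X ∈ U, ∃ Y ∈ 𝒰, Y ⊆ X}.Nonempty :=
    ⟨_, {X | X ∈ U₀}, U₀, rfl, hU₀, fun X hX => hX, fun X hX => ⟨X, hX, subset_rfl⟩⟩
  have hmem : uNumber ∈ {c : Cardinal | ∃ (𝒰 : Set (Set ℕ)) (U : Ultrafilter ℕ),
      Cardinal.mk 𝒰 = c ∧ (U : Filter ℕ) ≤ Filter.cofinite ∧
      (∀ X ∈ 𝒰, X ∈ U) ∧ ∀ X ∈ U, ∃ Y ∈ 𝒰, Y ⊆ X} := by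
    rw [uNumber]; exact csInf_mem hne
  obtain ⟨𝒰, U, hcard, hUcof, hsub, hgen⟩ := hmem
  -- every member of `U` is infinite
  have hinf : ∀ X ∈ U, Set.Infinite X := by
    intro X hX
    by_contra hfin
    rw [Set.not_infinite] at hfin
    have : Xᶜ ∈ U := hUcof hfin.compl_mem_cofinite
    exact (Ultrafilter.compl_mem_iff_notMem.mp this) hX
  have h𝒰inf : ∀ X ∈ 𝒰, Set.Infinite X := fun X hX => hinf X (hsub X hX)
  refine ⟨dX '' 𝒰, ?_, ?_, ?_, ?_, ?_⟩
  · -- cardinality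
    rw [← hcard]
    exact Cardinal.mk_image_eq_of_injOn dX 𝒰 (fun X hX Y hY h => by
      exact Set.Subset.antisymm (dX_subset_of_eq (h𝒰inf X hX) h)
        (dX_subset_of_eq (h𝒰inf Y hY) h.symm))
  · rintro d ⟨X, -, rfl⟩
    exact dX_isMetric X
  · -- directedness
    rintro d₁ ⟨X₁, hX₁, rfl⟩ d₂ ⟨X₂, hX₂, rfl⟩
    have hmemU : X₁ ∩ X₂ ∈ U := U.inter_mem (hsub _ hX₁) (hsub _ hX₂)
    obtain ⟨Z, hZ, hZsub⟩ := hgen _ hmemU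
    exact ⟨dX Z, ⟨Z, hZ, rfl⟩,
      dX_metricLE (hZsub.trans Set.inter_subset_left),
      dX_metricLE (hZsub.trans Set.inter_subset_right)⟩
  · -- separation of every B
    intro B
    have key : ∀ Y : Set ℕ, (Y ⊆ B ∨ Y ⊆ Bᶜ) →
        ∀ x ∈ B, ∀ y ∉ B, (1:ℝ) ≤ dX Y x y := by
      intro Y hY x hx y hy
      have hxy : x ≠ y := fun e => hy (e ▸ hx)
      rcases hY with hYB | hYB
      · rw [dX_of_notMem hxy (fun hc => hy (hYB hc.2))]
      · rw [dX_of_notMem hxy (fun hc => (hYB hc.1) hx)]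
    rcases U.mem_or_compl_mem B with hB | hB
    · obtain ⟨Y, hY, hYB⟩ := hgen _ hB
      exact ⟨dX Y, ⟨Y, hY, rfl⟩, 1, one_pos, key Y (Or.inl hYB)⟩
    · obtain ⟨Y, hY, hYB⟩ := hgen _ hB
      exact ⟨dX Y, ⟨Y, hY, rfl⟩, 1, one_pos, key Y (Or.inr hYB)⟩
  · -- failure of each single metric
    rintro d ⟨X, hX, rfl⟩
    have hXinf : (setOf (· ∈ X)).Infinite := h𝒰inf X hX
    set p : ℕ → Prop := (· ∈ X) with hp
    refine ⟨Set.range (fun k => Nat.nth p (2 * k)), fun ε hε => ?_⟩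
    obtain ⟨n, hn⟩ := exists_pow_lt_of_lt_one hε (by norm_num : (2:ℝ)⁻¹ < 1)
    set x := Nat.nth p (2 * n)
    set y := Nat.nth p (2 * n + 1)
    have hxy : x < y := (Nat.nth_lt_nth hXinf).mpr (by omega)
    have hxX : x ∈ X := Nat.nth_mem_of_infinite hXinf (2 * n)
    have hyX : y ∈ X := Nat.nth_mem_of_infinite hXinf (2 * n + 1)
    refine ⟨x, ⟨n, rfl⟩, y, ?_, ?_⟩
    · rintro ⟨k, hk⟩
      have := Nat.nth_injective hXinf hk
      omega
    · have hnx : n ≤ x := le_trans (by omega)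
        (Nat.le_nth (fun hf => absurd hf hXinf))
      have h1 : fexp x ≤ fexp n := fexp_anti hnx
      have h2 : fexp y < fexp x := fexp_strictAnti hxy
      have h3 : 0 < fexp y := fexp_pos y
      rw [dX_of_mem hxy.ne hxX hyX, abs_of_pos (by linarith)]
      have : fexp n < ε := hn
      linarith
end

section
/- There exists a family D of metrics on ω of cardinality 𝔩, directed under d₁ ⪯ d₂ (identity map (ω,d₂) → (ω,d₁) uniformly continuous), such that for every f ∈ 2^ω there is d ∈ D with f uniformly continuous from (ω,d) to ℝ, yet no single d ∈ D has the property that all f ∈ 2^ω are d-uniformly continuous. -/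
/-- The cardinal `𝔩`: the least `κ` such that for every `h ∈ ω^ω` there is a
family `Φ` of size `κ` of slaloms `φ` (with `|φ(n)| ≤ n+1`) such that every
`f ∈ Π_n h(n)` is eventually captured by some `φ ∈ Φ`. -/
noncomputable def lNumber : Cardinal :=
  sInf {c : Cardinal | ∀ h : ℕ → ℕ, ∃ Φ : Set (ℕ → Finset ℕ),
    Cardinal.mk Φ = c ∧ (∀ φ ∈ Φ, ∀ n, (φ n).card ≤ n + 1) ∧
    ∀ f : ℕ → ℕ, (∀ n, f n < h n) →
      ∃ φ ∈ Φ, ∀ᶠ n in Filter.atTop, f n ∈ φ n}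

/-- A `{0,1}`-valued function is uniformly continuous from `(ω,d)` to `ℝ`. -/
def BoolUC (d : ℕ → ℕ → ℝ) (f : ℕ → Bool) : Prop :=
  ∀ ε > (0:ℝ), ∃ δ > (0:ℝ), ∀ x y, d x y < δ →
    |(if f x then (1:ℝ) else 0) - (if f y then (1:ℝ) else 0)| < ε

noncomputable section
namespace S14
open scoped Classical

/-- block lengths -/
def L (n : ℕ) : ℕ := 2 ^ ((n+1)*(n+1)) + 1

lemma L_pos (n : ℕ) : 0 < L n := Nat.succ_pos _

lemma two_pow_lt_L {k n : ℕ} (h : k ≤ (n+1)*(n+1)) : 2 ^ k < L n :=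
  lt_of_le_of_lt (Nat.pow_le_pow_right (by norm_num) h) (Nat.lt_succ_self _)

/-- block starts -/
def m : ℕ → ℕ
  | 0 => 0
  | n+1 => m n + L n

lemma m_zero : m 0 = 0 := rfl
lemma m_succ (n : ℕ) : m (n+1) = m n + L n := rfl

lemma m_strictMono : StrictMono m := strictMono_nat_of_lt_succ fun n => by
  simp [m_succ]; exact L_pos n

lemma le_m (n : ℕ) : n ≤ m n := by
  induction n with
  | zero => simp [m_zero]
  | succ n ih => have := L_pos n; rw [m_succ]; omega

/-- block index of x -/
def blk (x : ℕ) : ℕ := Nat.findGreatest (fun n => m n ≤ x) x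

lemma m_blk_le (x : ℕ) : m (blk x) ≤ x :=
  Nat.findGreatest_spec (P := fun n => m n ≤ x) (m := 0) (Nat.zero_le x) (by simp [m_zero])

lemma lt_m_blk_succ (x : ℕ) : x < m (blk x + 1) := by
  by_contra h
  push_neg at h
  exact Nat.findGreatest_is_greatest (P := fun n => m n ≤ x) (Nat.lt_succ_self _)
    (le_trans (le_m _) h) h

lemma blk_eq {n x : ℕ} (h1 : m n ≤ x) (h2 : x < m (n+1)) : blk x = n := by
  have hle : n ≤ blk x := Nat.le_findGreatest (le_trans (le_m _) h1) h1
  rcases lt_or_eq_of_le hle with h | h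
  · exfalso
    have := m_strictMono.le_iff_le.mpr (Nat.succ_le_of_lt h)
    exact absurd (le_trans this (m_blk_le x)) (not_le.mpr h2)
  · exact h.symm

lemma blk_add {n j : ℕ} (hj : j < L n) : blk (m n + j) = n :=
  blk_eq (Nat.le_add_right _ _) (by rw [m_succ]; omega)

lemma sub_m_blk_lt (x : ℕ) : x - m (blk x) < L (blk x) := by
  have h1 := m_blk_le x
  have h2 := lt_m_blk_succ x
  rw [m_succ] at h2
  omega

/-- pattern equivalence -/
def patEquiv (n : ℕ) : (Fin (L n) → Bool) ≃ Fin (2 ^ L n) :=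
  Fintype.equivFinOfCardEq (by simp [Fintype.card_fun])

/-- decode `c` as pattern on `Fin (L n)` -/
def dec (n c : ℕ) (j : Fin (L n)) : Bool :=
  if h : c < 2 ^ L n then (patEquiv n).symm ⟨c, h⟩ j else false

/-- encode block `n` of `f` -/
def enc (f : ℕ → Bool) (n : ℕ) : ℕ := ((patEquiv n) (fun j => f (m n + j))).val

lemma enc_lt (f : ℕ → Bool) (n : ℕ) : enc f n < 2 ^ L n := Fin.is_lt _

lemma dec_enc (f : ℕ → Bool) (n : ℕ) (j : Fin (L n)) :
    dec n (enc f n) j = f (m n + j) := by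
  have h : ((patEquiv n) (fun j => f (m n + j))).val < 2 ^ L n := Fin.is_lt _
  unfold dec enc
  rw [dif_pos h, Fin.eta, Equiv.symm_apply_apply]

/-- the bit of code `c` at position `x` (relative to `x`'s block) -/
def pat (c x : ℕ) : Bool := dec (blk x) c ⟨x - m (blk x), sub_m_blk_lt x⟩

lemma pat_enc (f : ℕ → Bool) (x : ℕ) : pat (enc f (blk x)) x = f x := by
  unfold pat
  rw [dec_enc]
  congr 1
  show m (blk x) + (x - m (blk x)) = x
  have := m_blk_le x
  omega

/-- injective weight in (0, 1/2] -/
def wt (s : Finset ℕ) : ℝ := ((Encodable.encode s : ℝ) + 2)⁻¹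

lemma wt_pos (s : Finset ℕ) : 0 < wt s := by
  unfold wt; positivity

lemma wt_le (s : Finset ℕ) : wt s ≤ 1/2 := by
  unfold wt
  rw [inv_le_comm₀ (by positivity) (by norm_num)]
  have : (0:ℝ) ≤ (Encodable.encode s : ℝ) := Nat.cast_nonneg _
  norm_num

lemma wt_inj {s t : Finset ℕ} (h : wt s = wt t) : s = t := by
  unfold wt at h
  have h2 : ((Encodable.encode s : ℝ) + 2) = ((Encodable.encode t : ℝ) + 2) := by
    have hs : ((Encodable.encode s : ℝ) + 2) ≠ 0 := by positivity
    have ht : ((Encodable.encode t : ℝ) + 2) ≠ 0 := by positivity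
    field_simp at h
    exact_mod_cast h.symm
  have : (Encodable.encode s : ℝ) = (Encodable.encode t : ℝ) := by linarith
  exact Encodable.encode_injective (Nat.cast_injective this)

/-- the distance value for agreeing pairs in block `n` -/
def val (n : ℕ) (s : Finset ℕ) : ℝ := (1 + wt s) / 2 ^ (n+1)

lemma val_pos (n : ℕ) (s : Finset ℕ) : 0 < val n s := by
  unfold val
  have := wt_pos s
  positivity

lemma val_lt_one (n : ℕ) (s : Finset ℕ) : val n s < 1 := by
  unfold val
  rw [div_lt_one (by positivity)]
  have h1 := wt_le s
  have h2 : (2:ℝ) ≤ 2 ^ (n+1) := by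
    calc (2:ℝ) = 2^1 := (pow_one 2).symm
    _ ≤ 2^(n+1) := pow_le_pow_right₀ (by norm_num) (by omega)
  linarith

lemma val_gt (n : ℕ) (s : Finset ℕ) : 1 / 2 ^ (n+1) < val n s := by
  unfold val
  have := wt_pos s
  rw [div_lt_div_iff_of_pos_right (by positivity)]
  linarith

lemma val_le (n : ℕ) (s : Finset ℕ) : val n s ≤ (3/2) / 2 ^ (n+1) := by
  unfold val
  have := wt_le s
  rw [div_le_div_iff_of_pos_right (by positivity)]
  linarith


/-- agreement of `x` and `y` w.r.t. slalom `A` -/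
def Agr (A : ℕ → Finset ℕ) (x y : ℕ) : Prop :=
  blk x = blk y ∧ ∀ c ∈ A (blk x), pat c x = pat c y

lemma Agr.symm {A x y} (h : Agr A x y) : Agr A y x := by
  obtain ⟨h1, h2⟩ := h
  refine ⟨h1.symm, fun c hc => ?_⟩
  rw [← h1] at hc
  exact (h2 c hc).symm

lemma Agr.trans {A x y z} (h : Agr A x y) (h' : Agr A y z) : Agr A x z := by
  obtain ⟨h1, h2⟩ := h
  obtain ⟨h1', h2'⟩ := h'
  refine ⟨h1.trans h1', fun c hc => ?_⟩
  refine (h2 c hc).trans (h2' c ?_)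
  rwa [← h1]

/-- the metric associated to a slalom `A` -/
def dd (A : ℕ → Finset ℕ) (x y : ℕ) : ℝ :=
  if x = y then 0 else if Agr A x y then val (blk x) (A (blk x)) else 1

lemma dd_self (A : ℕ → Finset ℕ) (x : ℕ) : dd A x x = 0 := by simp [dd]

lemma dd_nonneg (A : ℕ → Finset ℕ) (x y : ℕ) : 0 ≤ dd A x y := by
  unfold dd
  split_ifs with h1 h2
  · exact le_refl _
  · exact (val_pos _ _).le
  · norm_num

lemma dd_le_one (A : ℕ → Finset ℕ) (x y : ℕ) : dd A x y ≤ 1 := by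
  unfold dd
  split_ifs with h1 h2
  · norm_num
  · exact (val_lt_one _ _).le
  · exact le_refl _

lemma dd_eq_zero_iff (A : ℕ → Finset ℕ) (x y : ℕ) : dd A x y = 0 ↔ x = y := by
  unfold dd
  split_ifs with h1 h2
  · simp [h1]
  · simp [h1, (val_pos (blk x) (A (blk x))).ne']
  · simp [h1]

lemma dd_symm (A : ℕ → Finset ℕ) (x y : ℕ) : dd A x y = dd A y x := by
  unfold dd
  by_cases hxy : x = y
  · simp [hxy]
  · rw [if_neg hxy, if_neg (Ne.symm hxy)]
    by_cases ha : Agr A x y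
    · rw [if_pos ha, if_pos ha.symm, ha.1]
    · rw [if_neg ha, if_neg (fun h => ha h.symm)]

lemma dd_of_agr {A : ℕ → Finset ℕ} {x y : ℕ} (hxy : x ≠ y) (h : Agr A x y) :
    dd A x y = val (blk x) (A (blk x)) := by
  rw [dd, if_neg hxy, if_pos h]

lemma dd_of_not_agr {A : ℕ → Finset ℕ} {x y : ℕ} (hxy : x ≠ y) (h : ¬ Agr A x y) :
    dd A x y = 1 := by
  rw [dd, if_neg hxy, if_neg h]

lemma dd_triangle (A : ℕ → Finset ℕ) (x y z : ℕ) : dd A x z ≤ dd A x y + dd A y z := by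
  by_cases hxz : x = z
  · rw [hxz, dd_self]
    exact add_nonneg (dd_nonneg _ _ _) (dd_nonneg _ _ _)
  by_cases hxy : x = y
  · subst hxy; rw [dd_self, zero_add]
  by_cases hyz : y = z
  · subst hyz; rw [dd_self, add_zero]
  by_cases haxy : Agr A x y
  · by_cases hayz : Agr A y z
    · have haxz : Agr A x z := haxy.trans hayz
      rw [dd_of_agr hxz haxz, dd_of_agr hxy haxy]
      have := dd_nonneg A y z
      linarith
    · rw [dd_of_not_agr hyz hayz]
      have h1 := dd_le_one A x z
      have h2 := dd_nonneg A x y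
      linarith
  · rw [dd_of_not_agr hxy haxy]
    have h1 := dd_le_one A x z
    have h2 := dd_nonneg A y z
    linarith

lemma isMetric_dd (A : ℕ → Finset ℕ) : IsMetricOn (dd A) :=
  ⟨dd_eq_zero_iff A, dd_symm A, dd_triangle A⟩

/-- comparison: finer slalom gives 2-Lipschitz-comparable metric -/
lemma dd_le_two_mul (A B : ℕ → Finset ℕ) (hAB : ∀ n, A n ⊆ B n) (x y : ℕ) :
    dd A x y ≤ 2 * dd B x y := by
  by_cases hxy : x = y
  · simp [hxy, dd_self]
  by_cases hb : Agr B x y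
  · have ha : Agr A x y := ⟨hb.1, fun c hc => hb.2 c (hAB _ hc)⟩
    rw [dd_of_agr hxy ha, dd_of_agr hxy hb]
    have h1 := val_le (blk x) (A (blk x))
    have h2 := val_gt (blk x) (B (blk x))
    have h3 : (0:ℝ) < 1/2^(blk x+1) := by positivity
    have h4 : (3:ℝ)/2/2^(blk x+1) = (3/2) * (1/2^(blk x+1)) := by ring
    have h5 : (1:ℝ)/2^(blk x+1) = 1 * (1/2^(blk x+1)) := by ring
    rw [h4] at h1
    linarith
  · rw [dd_of_not_agr hxy hb]
    have := dd_le_one A x y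
    linarith

lemma metricLE_dd {A B : ℕ → Finset ℕ} (hAB : ∀ n, A n ⊆ B n) :
    MetricLE (dd A) (dd B) := by
  intro ε hε
  refine ⟨ε/2, by linarith, fun x y h => ?_⟩
  have := dd_le_two_mul A B hAB x y
  linarith


lemma val_lt_pow (n : ℕ) (s : Finset ℕ) : val n s < (1/2:ℝ)^n := by
  have h1 := val_le n s
  have h2 : ((1:ℝ)/2)^n = 2/2^(n+1) := by
    rw [div_pow, one_pow, pow_succ]
    field_simp
  rw [h2]
  have h3 : (0:ℝ) < 2^(n+1) := by positivity
  calc val n s ≤ 3/2/2^(n+1) := h1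
    _ < 2/2^(n+1) := by rw [div_lt_div_iff_of_pos_right h3]; norm_num

lemma exists_agr_pair (A : Finset ℕ) (n : ℕ) (h : 2 ^ A.card < L n) :
    ∃ x y : ℕ, x ≠ y ∧ blk x = n ∧ blk y = n ∧ ∀ c ∈ A, pat c x = pat c y := by
  have hcard : Fintype.card (↥A → Bool) < Fintype.card (Fin (L n)) := by
    rw [Fintype.card_fun, Fintype.card_coe, Fintype.card_fin, Fintype.card_bool]
    exact h
  obtain ⟨j, j', hne, heq⟩ := Fintype.exists_ne_map_eq_of_card_lt
    (fun j : Fin (L n) => fun c : ↥A => pat c.1 (m n + j.1)) hcard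
  refine ⟨m n + j.1, m n + j'.1, ?_, blk_add j.2, blk_add j'.2, fun c hc => ?_⟩
  · intro hx
    exact hne (Fin.ext (by omega))
  · exact congrFun heq ⟨c, hc⟩

/-- no single metric `dd A` (with suitably small slalom) makes all of `2^ω` UC -/
lemma not_all_UC (A : ℕ → Finset ℕ) (M : ℕ)
    (hM : ∀ n, M ≤ n → 2 ^ (A n).card < L n) :
    ∃ f : ℕ → Bool, ¬ BoolUC (dd A) f := by
  have hpair : ∀ n, M ≤ n → ∃ p : ℕ × ℕ, p.1 ≠ p.2 ∧ blk p.1 = n ∧ blk p.2 = n ∧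
      ∀ c ∈ A n, pat c p.1 = pat c p.2 := by
    intro n hn
    obtain ⟨x, y, h1, h2, h3, h4⟩ := exists_agr_pair (A n) n (hM n hn)
    exact ⟨(x, y), h1, h2, h3, h4⟩
  let xy : ℕ → ℕ × ℕ := fun n => if h : M ≤ n then (hpair n h).choose else (0, 1)
  have hxy : ∀ n, M ≤ n → (xy n).1 ≠ (xy n).2 ∧ blk (xy n).1 = n ∧ blk (xy n).2 = n ∧
      ∀ c ∈ A n, pat c (xy n).1 = pat c (xy n).2 := by
    intro n hn
    simp only [xy, dif_pos hn]
    exact (hpair n hn).choose_spec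
  refine ⟨fun z => if ∃ n, M ≤ n ∧ z = (xy n).1 then true else false, ?_⟩
  intro hUC
  obtain ⟨δ, hδ, H⟩ := hUC (1/2) (by norm_num)
  obtain ⟨n₀, hn₀⟩ := exists_pow_lt_of_lt_one hδ (show (1/2:ℝ) < 1 by norm_num)
  set n := max M n₀ with hn
  obtain ⟨hne, hbx, hby, hagr⟩ := hxy n (le_max_left _ _)
  have hd : dd A (xy n).1 (xy n).2 < δ := by
    rw [dd_of_agr hne ⟨hbx.trans hby.symm, by rw [hbx]; exact hagr⟩]
    calc val (blk (xy n).1) (A (blk (xy n).1)) < (1/2:ℝ)^(blk (xy n).1) :=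
          val_lt_pow _ _
      _ ≤ (1/2:ℝ)^n₀ := by
          rw [hbx]
          exact pow_le_pow_of_le_one (by norm_num) (by norm_num) (le_max_right _ _)
      _ < δ := hn₀
  have h1 : (if ∃ k, M ≤ k ∧ (xy n).1 = (xy k).1 then true else false) = true :=
    if_pos ⟨n, le_max_left _ _, rfl⟩
  have h2 : (if ∃ k, M ≤ k ∧ (xy n).2 = (xy k).1 then true else false) = false := by
    rw [if_neg]
    rintro ⟨k, hk, heq⟩
    obtain ⟨hne', hbx', _, _⟩ := hxy k hk
    have : k = n := by rw [← hbx', ← heq, hby]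
    exact hne (by rw [heq, this])
  have := H _ _ hd
  simp only [h1, h2] at this
  norm_num at this

/-- covering: if the code of `f` is eventually in `A`, then `f` is `dd A`-UC -/
lemma covering_UC {A : ℕ → Finset ℕ} {f : ℕ → Bool} {N : ℕ}
    (hcap : ∀ n, N ≤ n → enc f n ∈ A n) : BoolUC (dd A) f := by
  intro ε hε
  refine ⟨1/2^(N+1), by positivity, fun x y hd => ?_⟩
  have hfe : f x = f y := by
    by_cases hxy : x = y
    · rw [hxy]
    by_cases hagr : Agr A x y
    · rw [dd_of_agr hxy hagr] at hd
      have hvb := val_gt (blk x) (A (blk x))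
      have hb : N ≤ blk x := by
        have h5 : (1:ℝ)/2^(blk x + 1) < 1/2^(N+1) := lt_trans hvb hd
        rw [div_lt_div_iff₀ (by positivity) (by positivity)] at h5
        have h6 : (2:ℝ)^(N+1) < 2^(blk x + 1) := by linarith
        have := (pow_lt_pow_iff_right₀ (a := (2:ℝ)) (by norm_num)).mp h6
        omega
      have hc := hcap (blk x) hb
      have hpp := hagr.2 _ hc
      rw [pat_enc] at hpp
      rw [hagr.1] at hpp
      rw [pat_enc] at hpp
      exact hpp
    · rw [dd_of_not_agr hxy hagr] at hd
      exfalso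
      have : (1:ℝ)/2^(N+1) ≤ 1 := by
        rw [div_le_one (by positivity)]
        exact one_le_pow₀ (by norm_num)
      linarith
  rw [hfe, sub_self, abs_zero]
  exact hε

/-- the defining set of `lNumber` -/
def SSet : Set Cardinal :=
  {c : Cardinal | ∀ h : ℕ → ℕ, ∃ Φ : Set (ℕ → Finset ℕ),
    Cardinal.mk Φ = c ∧ (∀ φ ∈ Φ, ∀ n, (φ n).card ≤ n + 1) ∧
    ∀ f : ℕ → ℕ, (∀ n, f n < h n) →
      ∃ φ ∈ Φ, ∀ᶠ n in Filter.atTop, f n ∈ φ n}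

lemma lNumber_eq : lNumber = sInf SSet := rfl

lemma SSet_nonempty : S14.SSet.Nonempty := by
  refine ⟨Cardinal.mk ↥(Set.range (fun (g : ℕ → ℕ) (n : ℕ) => ({g n} : Finset ℕ))), fun h => ?_⟩
  refine ⟨Set.range (fun (g : ℕ → ℕ) (n : ℕ) => ({g n} : Finset ℕ)), rfl, ?_, ?_⟩
  · rintro φ ⟨g, rfl⟩ n
    simp
  · intro f _
    exact ⟨fun n => {f n}, ⟨f, rfl⟩, Filter.Eventually.of_forall fun n => Finset.mem_singleton_self _⟩

lemma lNumber_mem : lNumber ∈ SSet := csInf_mem SSet_nonempty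

lemma aleph0_le_of_mem_SSet {c : Cardinal} (hc : c ∈ SSet) : Cardinal.aleph0 ≤ c := by
  by_contra hlt
  push_neg at hlt
  obtain ⟨M, rfl⟩ := Cardinal.lt_aleph0.mp hlt
  obtain ⟨Φ, hmk, hw, hcap⟩ := hc (fun n => M * (n + 1) + 1)
  have hfin : Φ.Finite :=
    Cardinal.lt_aleph0_iff_set_finite.mp (by rw [hmk]; exact Cardinal.nat_lt_aleph0 M)
  set T : Finset (ℕ → Finset ℕ) := hfin.toFinset with hT
  have hTcard : T.card = M := by
    have h1 : (T.card : Cardinal) = Cardinal.mk ↥Φ := by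
      rw [← Cardinal.mk_coe_finset]
      congr 1
      simp [hT, hfin.coe_toFinset]
    rw [hmk] at h1
    exact_mod_cast h1
  have hex : ∀ n, ∃ k, k < M * (n + 1) + 1 ∧ ∀ φ ∈ Φ, k ∉ φ n := by
    intro n
    set U : Finset ℕ := T.biUnion (fun φ => φ n) with hU
    have hUcard : U.card ≤ M * (n + 1) := by
      calc U.card ≤ ∑ φ ∈ T, (φ n).card := Finset.card_biUnion_le
        _ ≤ T.card * (n + 1) := by
            rw [← smul_eq_mul]
            exact Finset.sum_le_card_nsmul T _ (n + 1)
              (fun φ hφ => hw φ (hfin.mem_toFinset.mp hφ) n)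
        _ = M * (n + 1) := by rw [hTcard]
    have hns : ¬ (Finset.range (M * (n + 1) + 1) ⊆ U) := by
      intro hsub
      have := Finset.card_le_card hsub
      rw [Finset.card_range] at this
      omega
    obtain ⟨k, hk1, hk2⟩ := Finset.not_subset.mp hns
    refine ⟨k, Finset.mem_range.mp hk1, fun φ hφ hkφ => hk2 ?_⟩
    exact Finset.mem_biUnion.mpr ⟨φ, hfin.mem_toFinset.mpr hφ, hkφ⟩
  obtain ⟨φ, hφ, hev⟩ := hcap (fun n => (hex n).choose) (fun n => (hex n).choose_spec.1)
  obtain ⟨N, hN⟩ := Filter.eventually_atTop.mp hev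
  exact (hex N).choose_spec.2 φ hφ (hN N le_rfl)

lemma aleph0_le_lNumber : Cardinal.aleph0 ≤ lNumber :=
  le_csInf SSet_nonempty fun _ hc => aleph0_le_of_mem_SSet hc

lemma val_inj {n : ℕ} {s t : Finset ℕ} (h : val n s = val n t) : s = t := by
  apply wt_inj
  unfold val at h
  have h2 : (0:ℝ) < 2^(n+1) := by positivity
  field_simp at h
  linarith

/-- if `dd A = dd B` and `A` has small blocks, then `A = B` -/
lemma slalom_eq_of_dd_eq {A B : ℕ → Finset ℕ}
    (hA : ∀ n, 2 ^ (A n).card < L n) (h : dd A = dd B) : A = B := by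
  funext n
  obtain ⟨x, y, hxy, hbx, hby, hagr⟩ := exists_agr_pair (A n) n (hA n)
  have hAgr : Agr A x y := ⟨hbx.trans hby.symm, by rw [hbx]; exact hagr⟩
  have h1 : dd A x y = val n (A n) := by rw [dd_of_agr hxy hAgr, hbx]
  have h2 : dd B x y = val n (A n) := by rw [← h]; exact h1
  by_cases hB : Agr B x y
  · rw [dd_of_agr hxy hB, hbx] at h2
    exact val_inj h2.symm
  · rw [dd_of_not_agr hxy hB] at h2
    exact absurd h2.symm (ne_of_lt (val_lt_one n (A n)))

end S14

/-- There exists a `⪯`-directed family `D` of metrics on `ω` of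
cardinality `𝔩` such that every `f ∈ 2^ω` is uniformly continuous with
respect to some `d ∈ D`, but no single `d ∈ D` makes all `f ∈ 2^ω` uniformly
continuous. -/
theorem stmt14 :
    ∃ D : Set (ℕ → ℕ → ℝ), Cardinal.mk D = lNumber ∧
      (∀ d ∈ D, IsMetricOn d) ∧
      (∀ d₁ ∈ D, ∀ d₂ ∈ D, ∃ d ∈ D, MetricLE d₁ d ∧ MetricLE d₂ d) ∧
      (∀ f : ℕ → Bool, ∃ d ∈ D, BoolUC d f) ∧
      (∀ d ∈ D, ∃ f : ℕ → Bool, ¬ BoolUC d f) := by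
  classical
  open S14 in
  obtain ⟨Φ, hmk, hw, hcap⟩ := S14.lNumber_mem (fun n => 2 ^ S14.L n)
  have hinf : Infinite ↥Φ := Cardinal.infinite_iff.mpr (by rw [hmk]; exact S14.aleph0_le_lNumber)
  let J : Finset ↥Φ → ℕ → Finset ℕ := fun F n => F.biUnion (fun φ => φ.1 n)
  have hJcard : ∀ (F : Finset ↥Φ) (n : ℕ), (J F n).card ≤ F.card * (n + 1) := by
    intro F n
    calc (J F n).card ≤ ∑ φ ∈ F, (φ.1 n).card := Finset.card_biUnion_le
      _ ≤ F.card * (n + 1) := by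
          rw [← smul_eq_mul]
          exact Finset.sum_le_card_nsmul F _ (n + 1) (fun φ _ => hw φ.1 φ.2 n)
  have hJsing : ∀ (φ : ↥Φ) (n : ℕ), J {φ} n = φ.1 n := by
    intro φ n
    simp [J, Finset.singleton_biUnion]
  let g : {F : Finset ↥Φ // F.Nonempty} → (ℕ → ℕ → ℝ) := fun F => S14.dd (J F.1)
  refine ⟨Set.range g, ?_, ?_, ?_, ?_, ?_⟩
  · -- cardinality
    apply le_antisymm
    · calc Cardinal.mk ↥(Set.range g) ≤ Cardinal.mk {F : Finset ↥Φ // F.Nonempty} :=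
            Cardinal.mk_range_le
        _ ≤ Cardinal.mk (Finset ↥Φ) := Cardinal.mk_subtype_le _
        _ = Cardinal.mk ↥Φ := Cardinal.mk_finset_of_infinite ↥Φ
        _ = lNumber := hmk
    · rw [← hmk]
      have hsmall : ∀ (φ : ↥Φ) (n : ℕ), 2 ^ ((φ.1 n).card) < S14.L n := by
        intro φ n
        exact S14.two_pow_lt_L (le_trans (hw φ.1 φ.2 n) (Nat.le_mul_of_pos_left _ (by omega)))
      have hinj : Function.Injective
          (fun φ : ↥Φ => (⟨g ⟨{φ}, Finset.singleton_nonempty φ⟩, Set.mem_range_self _⟩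
            : ↥(Set.range g))) := by
        intro φ ψ hgeq
        have heq : S14.dd (J {φ}) = S14.dd (J {ψ}) := congrArg Subtype.val hgeq
        have : J {φ} = J {ψ} := S14.slalom_eq_of_dd_eq
          (fun n => by rw [hJsing]; exact hsmall φ n) heq
        have hfe : φ.1 = ψ.1 := by
          funext n
          rw [← hJsing φ n, ← hJsing ψ n, this]
        exact Subtype.ext hfe
      exact Cardinal.mk_le_of_injective hinj
  · -- metrics
    rintro d ⟨F, rfl⟩
    exact S14.isMetric_dd _
  · -- directed
    rintro d₁ ⟨F₁, rfl⟩ d₂ ⟨F₂, rfl⟩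
    refine ⟨g ⟨F₁.1 ∪ F₂.1, Finset.Nonempty.inl F₁.2⟩, Set.mem_range_self _, ?_, ?_⟩
    · exact S14.metricLE_dd (fun n =>
        Finset.biUnion_subset_biUnion_of_subset_left _ Finset.subset_union_left)
    · exact S14.metricLE_dd (fun n =>
        Finset.biUnion_subset_biUnion_of_subset_left _ Finset.subset_union_right)
  · -- covering
    intro f
    obtain ⟨φ, hφ, hev⟩ := hcap (S14.enc f) (fun n => S14.enc_lt f n)
    obtain ⟨N, hN⟩ := Filter.eventually_atTop.mp hev
    refine ⟨g ⟨{⟨φ, hφ⟩}, Finset.singleton_nonempty _⟩, Set.mem_range_self _, ?_⟩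
    apply S14.covering_UC (N := N)
    intro n hn
    rw [hJsing]
    exact hN n hn
  · -- not universal
    rintro d ⟨F, rfl⟩
    apply S14.not_all_UC (J F.1) (F.1.card + 1)
    intro n hn
    apply S14.two_pow_lt_L
    calc (J F.1 n).card ≤ F.1.card * (n + 1) := hJcard F.1 n
      _ ≤ (n + 1) * (n + 1) := by
          have : F.1.card ≤ n + 1 := by omega
          exact Nat.mul_le_mul_right _ this
end
end

section
/- The set A = {(f₁, f₂) ∈ ℝ^{ω×ω} × ℝ^{ω×ω} : for all rational ε > 0 there exists rational δ > 0 such that for all (x,y) ∈ ω×ω, f₂(x,y) ≥ δ or f₁(x,y) ≤ ε} is a Π⁰₃ subset of the Polish space (ℝ^{ω×ω})², and for metrics d₁, d₂ on ω, (d₁, d₂) ∈ A if and only if the identity map from (ω, d₂) to (ω, d₁) is uniformly continuous. -/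
/-- `d` (in uncurried form) is a metric on `α`. -/
def IsMetricOn2 {α : Type*} (d : α × α → ℝ) : Prop :=
  (∀ x y, d (x, y) = 0 ↔ x = y) ∧ (∀ x y, d (x, y) = d (y, x)) ∧
    ∀ x y z, d (x, z) ≤ d (x, y) + d (y, z)

/-- A `Π⁰₃` set: a countable intersection of countable unions of closed sets. -/
def IsPi03 {α : Type*} [TopologicalSpace α] (s : Set α) : Prop :=
  ∃ C : ℕ → ℕ → Set α, (∀ i j, IsClosed (C i j)) ∧ s = ⋂ i, ⋃ j, C i j


lemma stmt16_aux (e : ℕ ≃ ℚ) :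
    IsPi03 {p : (ℕ × ℕ → ℝ) × (ℕ × ℕ → ℝ) |
      ∀ ε : ℚ, 0 < ε → ∃ δ : ℚ, 0 < δ ∧
        ∀ q : ℕ × ℕ, (δ : ℝ) ≤ p.2 q ∨ p.1 q ≤ (ε : ℝ)} := by
  refine ⟨fun i j =>
    {p : (ℕ × ℕ → ℝ) × (ℕ × ℕ → ℝ) | 0 < e i → 0 < e j ∧
      ∀ q : ℕ × ℕ, ((e j : ℚ) : ℝ) ≤ p.2 q ∨ p.1 q ≤ ((e i : ℚ) : ℝ)}, ?_, ?_⟩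
  · intro i j
    show IsClosed {p : (ℕ × ℕ → ℝ) × (ℕ × ℕ → ℝ) | 0 < e i → 0 < e j ∧
      ∀ q : ℕ × ℕ, ((e j : ℚ) : ℝ) ≤ p.2 q ∨ p.1 q ≤ ((e i : ℚ) : ℝ)}
    by_cases hi : 0 < e i
    · by_cases hj : 0 < e j
      · have h : {p : (ℕ × ℕ → ℝ) × (ℕ × ℕ → ℝ) | 0 < e i → 0 < e j ∧
            ∀ q : ℕ × ℕ, ((e j : ℚ) : ℝ) ≤ p.2 q ∨ p.1 q ≤ ((e i : ℚ) : ℝ)} =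
            ⋂ q : ℕ × ℕ, ({p : (ℕ × ℕ → ℝ) × (ℕ × ℕ → ℝ) | ((e j : ℚ) : ℝ) ≤ p.2 q} ∪
              {p | p.1 q ≤ ((e i : ℚ) : ℝ)}) := by
          ext p
          simp only [Set.mem_setOf_eq, Set.mem_iInter, Set.mem_union]
          exact ⟨fun h q => (h hi).2 q, fun h _ => ⟨hj, h⟩⟩
        rw [h]
        refine isClosed_iInter fun q => IsClosed.union ?_ ?_
        · exact isClosed_le continuous_const
            ((continuous_apply q).comp continuous_snd)
        · exact isClosed_le ((continuous_apply q).comp continuous_fst)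
            continuous_const
      · have h : {p : (ℕ × ℕ → ℝ) × (ℕ × ℕ → ℝ) | 0 < e i → 0 < e j ∧
            ∀ q : ℕ × ℕ, ((e j : ℚ) : ℝ) ≤ p.2 q ∨ p.1 q ≤ ((e i : ℚ) : ℝ)} = ∅ := by
          ext p
          simp only [Set.mem_setOf_eq, Set.mem_empty_iff_false, iff_false]
          exact fun h => hj (h hi).1
        rw [h]; exact isClosed_empty
    · have h : {p : (ℕ × ℕ → ℝ) × (ℕ × ℕ → ℝ) | 0 < e i → 0 < e j ∧
          ∀ q : ℕ × ℕ, ((e j : ℚ) : ℝ) ≤ p.2 q ∨ p.1 q ≤ ((e i : ℚ) : ℝ)} = Set.univ := by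
        ext p
        simp only [Set.mem_setOf_eq, Set.mem_univ, iff_true]
        exact fun h => absurd h hi
      rw [h]; exact isClosed_univ
  · ext p
    simp only [Set.mem_setOf_eq, Set.mem_iInter, Set.mem_iUnion]
    constructor
    · intro h i
      by_cases hi : 0 < e i
      · obtain ⟨δ, hδ, hδ'⟩ := h (e i) hi
        refine ⟨e.symm δ, fun _ => ?_⟩
        rw [Equiv.apply_symm_apply]
        exact ⟨hδ, hδ'⟩
      · exact ⟨0, fun h' => absurd h' hi⟩
    · intro h ε hε
      obtain ⟨j, hj⟩ := h (e.symm ε)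
      rw [Equiv.apply_symm_apply] at hj
      obtain ⟨hj1, hj2⟩ := hj hε
      exact ⟨e j, hj1, hj2⟩

/-- The set `A ⊆ (ℝ^{ω×ω})²` defined by the `∀ε ∃δ ∀(x,y)`
clause is `Π⁰₃`, and for metrics `d₁, d₂` on `ω`, `(d₁,d₂) ∈ A` iff the
identity map `(ω,d₂) → (ω,d₁)` is uniformly continuous. -/
theorem stmt16 :
    IsPi03 {p : (ℕ × ℕ → ℝ) × (ℕ × ℕ → ℝ) |
      ∀ ε : ℚ, 0 < ε → ∃ δ : ℚ, 0 < δ ∧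
        ∀ q : ℕ × ℕ, (δ : ℝ) ≤ p.2 q ∨ p.1 q ≤ (ε : ℝ)} ∧
    ∀ d₁ d₂ : ℕ × ℕ → ℝ, IsMetricOn2 d₁ → IsMetricOn2 d₂ →
      ((d₁, d₂) ∈ {p : (ℕ × ℕ → ℝ) × (ℕ × ℕ → ℝ) |
          ∀ ε : ℚ, 0 < ε → ∃ δ : ℚ, 0 < δ ∧
            ∀ q : ℕ × ℕ, (δ : ℝ) ≤ p.2 q ∨ p.1 q ≤ (ε : ℝ)} ↔
        ∀ ε > (0:ℝ), ∃ δ > (0:ℝ), ∀ x y : ℕ,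
          d₂ (x, y) < δ → d₁ (x, y) < ε) := by
  constructor
  · exact stmt16_aux (Denumerable.eqv ℚ).symm
  · intro d₁ d₂ _ _
    constructor
    · intro h ε hε
      obtain ⟨ε', hε'0, hε'⟩ := exists_rat_btwn hε
      rw [Rat.cast_pos] at hε'0
      obtain ⟨δ, hδ, hδ'⟩ := h ε' hε'0
      refine ⟨(δ : ℝ), by exact_mod_cast hδ, fun x y hxy => ?_⟩
      rcases hδ' (x, y) with h1 | h1
      · exact absurd hxy (not_lt.2 h1)
      · exact lt_of_le_of_lt h1 hε'
    · intro h ε hε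
      obtain ⟨δ, hδ, hδ'⟩ := h (ε : ℝ) (by exact_mod_cast hε)
      obtain ⟨δ', hδ'0, hδ'δ⟩ := exists_rat_btwn hδ
      rw [Rat.cast_pos] at hδ'0
      refine ⟨δ', hδ'0, fun q => ?_⟩
      rcases lt_or_ge (d₂ q) (δ' : ℝ) with h1 | h1
      · exact Or.inr (le_of_lt (hδ' q.1 q.2 (h1.trans hδ'δ)))
      · exact Or.inl h1
end

section
/- For every nonempty finite family ℱ of moderate refinements of a fixed partition ⟨I_n : n < ω⟩ of ω with |I_n| = 2^{(n+1)²}, the function ρ_ℱ defined by ρ_ℱ(x,y) = 0 if x = y; ρ_ℱ(x,y) = 1 if x ≠ y and every 𝒫 ∈ ℱ puts x, y in the same piece; and ρ_ℱ(x,y) = 1 + max{m,n} if otherwise, where x ∈ I_m and y ∈ I_n; is a proper metric on ω, i.e., a metric for which every bounded set is finite. -/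
/-- `P : ℕ → ℕ` (a labelling, whose fibers are the pieces) encodes a moderate
refinement of the partition `I`: it refines `I`, and splits each `I n` into at
most `2 ^ (n+1)` pieces. -/
def IsModerateRefinement (I : ℕ → Finset ℕ) (P : ℕ → ℕ) : Prop :=
  (∀ x y, P x = P y → ∀ n, x ∈ I n → y ∈ I n) ∧
  ∀ n, ((I n).image P).card ≤ 2 ^ (n + 1)

/-- For a partition `⟨I_n⟩` of `ω` with `|I_n| = 2^{(n+1)²}`
and a nonempty finite family `ℱ` of moderate refinements, the function `ρ_ℱ`
(described by its defining equations) is a proper metric on `ω`: a metric for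
which every bounded set is finite. -/
theorem stmt18 (I : ℕ → Finset ℕ)
    (hcard : ∀ n, (I n).card = 2 ^ ((n + 1) ^ 2))
    (hdisj : ∀ m n, m ≠ n → Disjoint (I m) (I n))
    (hcover : ∀ x : ℕ, ∃ n, x ∈ I n)
    (k : ℕ) (hk : 0 < k) (F : Fin k → ℕ → ℕ)
    (hF : ∀ j, IsModerateRefinement I (F j))
    (ρ : ℕ → ℕ → ℝ)
    (hρ0 : ∀ x, ρ x x = 0)
    (hρ1 : ∀ x y, x ≠ y → (∀ j, F j x = F j y) → ρ x y = 1)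
    (hρ2 : ∀ x y m n, x ≠ y → (∃ j, F j x ≠ F j y) →
      x ∈ I m → y ∈ I n → ρ x y = 1 + max m n) :
    IsMetricOn ρ ∧
    ∀ B : Set ℕ, (∃ R : ℝ, ∀ x ∈ B, ∀ y ∈ B, ρ x y ≤ R) → B.Finite := by

  classical
  obtain ⟨ι, hι⟩ : ∃ ι : ℕ → ℕ, ∀ x, x ∈ I (ι x) :=
    ⟨fun x => (hcover x).choose, fun x => (hcover x).choose_spec⟩
  have huniq : ∀ x m n, x ∈ I m → x ∈ I n → m = n := by
    intro x m n hm hn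
    by_contra h
    exact Finset.disjoint_left.mp (hdisj m n h) hm hn
  -- if all refinements agree, points are in the same I-piece
  have hsame : ∀ x y, (∀ j, F j x = F j y) → ι x = ι y := by
    intro x y ha
    have := (hF ⟨0, hk⟩).1 x y (ha ⟨0, hk⟩) (ι x) (hι x)
    exact huniq y (ι x) (ι y) this (hι y)
  have hval : ∀ x y, x ≠ y →
      ρ x y = 1 ∨ ρ x y = 1 + max (ι x) (ι y) := by
    intro x y hxy
    by_cases ha : ∀ j, F j x = F j y
    · exact Or.inl (hρ1 x y hxy ha)
    · push_neg at ha
      exact Or.inr (hρ2 x y (ι x) (ι y) hxy ha (hι x) (hι y))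
  have hge1 : ∀ x y, x ≠ y → 1 ≤ ρ x y := by
    intro x y hxy
    rcases hval x y hxy with h | h
    · rw [h]
    · rw [h]; have : (0:ℝ) ≤ max (ι x) (ι y) := by positivity
      linarith
  have hge0 : ∀ x y, 0 ≤ ρ x y := by
    intro x y
    by_cases hxy : x = y
    · subst hxy; rw [hρ0]
    · linarith [hge1 x y hxy]
  have hub : ∀ x y, x ≠ y → ρ x y ≤ 1 + max (ι x) (ι y) := by
    intro x y hxy
    rcases hval x y hxy with h | h
    · rw [h]; have : (0:ℝ) ≤ max (ι x) (ι y) := by positivity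
      linarith
    · rw [h]
  refine ⟨⟨?_, ?_, ?_⟩, ?_⟩
  · -- zero iff equal
    intro x y
    constructor
    · intro h
      by_contra hxy
      linarith [hge1 x y hxy]
    · rintro rfl; exact hρ0 x
  · -- symmetry
    intro x y
    by_cases hxy : x = y
    · subst hxy; rfl
    by_cases ha : ∀ j, F j x = F j y
    · rw [hρ1 x y hxy ha, hρ1 y x (Ne.symm hxy) fun j => (ha j).symm]
    · push_neg at ha
      obtain ⟨j, hj⟩ := ha
      rw [hρ2 x y (ι x) (ι y) hxy ⟨j, hj⟩ (hι x) (hι y),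
        hρ2 y x (ι y) (ι x) (Ne.symm hxy) ⟨j, Ne.symm hj⟩ (hι y) (hι x),
        max_comm]
  · -- triangle inequality
    intro x y z
    by_cases hxz : x = z
    · subst hxz; rw [hρ0]; linarith [hge0 x y, hge0 y x]
    by_cases hxy : x = y
    · subst hxy; rw [hρ0]; linarith
    by_cases hyz : y = z
    · subst hyz; rw [hρ0]; linarith
    by_cases ha : ∀ j, F j x = F j y
    · have hxy1 : ρ x y = 1 := hρ1 x y hxy ha
      have hixy : ι x = ι y := hsame x y ha
      by_cases hb : ∀ j, F j y = F j z
      · have : ρ x z = 1 := hρ1 x z hxz fun j => (ha j).trans (hb j)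
        rw [this, hxy1, hρ1 y z hyz hb]; norm_num
      · push_neg at hb
        have h2 : ρ y z = 1 + max (ι y) (ι z) :=
          hρ2 y z (ι y) (ι z) hyz hb (hι y) (hι z)
        have heq : ((ι x ⊔ ι z : ℕ) : ℝ) = ((ι y ⊔ ι z : ℕ) : ℝ) := by rw [hixy]
        rw [hxy1, h2]
        linarith [hub x z hxz, heq]
    · push_neg at ha
      have h1 : ρ x y = 1 + max (ι x) (ι y) :=
        hρ2 x y (ι x) (ι y) hxy ha (hι x) (hι y)
      have hxz' := hub x z hxz
      by_cases hb : ∀ j, F j y = F j z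
      · have hiyz : ι y = ι z := hsame y z hb
        have h2 : ρ y z = 1 := hρ1 y z hyz hb
        have heq : ((ι x ⊔ ι z : ℕ) : ℝ) = ((ι x ⊔ ι y : ℕ) : ℝ) := by rw [hiyz]
        rw [h1, h2]
        linarith [hub x z hxz, heq]
      · push_neg at hb
        have h2 : ρ y z = 1 + max (ι y) (ι z) :=
          hρ2 y z (ι y) (ι z) hyz hb (hι y) (hι z)
        have hmax : ((max (ι x) (ι z) : ℕ) : ℝ) ≤ ((max (ι x) (ι y) : ℕ) : ℝ) + ((max (ι y) (ι z) : ℕ) : ℝ) := by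
          have h3 : max (ι x) (ι z) ≤ max (ι x) (ι y) + max (ι y) (ι z) :=
            max_le (le_trans (le_max_left _ _) (Nat.le_add_right _ _))
              (le_trans (le_max_right _ _) (Nat.le_add_left _ _))
          have h4 := (Nat.cast_le (α := ℝ)).mpr h3
          rwa [Nat.cast_add] at h4
        rw [h1, h2]
        linarith [hxz', hmax]
  · -- properness
    rintro B ⟨R, hR⟩
    rcases B.eq_empty_or_nonempty with rfl | ⟨x0, hx0⟩
    · exact Set.finite_empty
    have hsub : B ⊆ ↑((Finset.range (⌊R⌋₊ + 1) ∪ {ι x0}).biUnion I) := by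
      intro y hy
      simp only [Finset.coe_biUnion, Set.mem_iUnion, Finset.mem_coe,
        Finset.mem_union, Finset.mem_range, Finset.mem_singleton]
      by_cases hxy : x0 = y
      · exact ⟨ι x0, Or.inr rfl, hxy ▸ hι x0⟩
      by_cases ha : ∀ j, F j x0 = F j y
      · exact ⟨ι x0, Or.inr rfl, (hF ⟨0, hk⟩).1 x0 y (ha ⟨0, hk⟩) (ι x0) (hι x0)⟩
      · push_neg at ha
        have h2 : ρ x0 y = 1 + max (ι x0) (ι y) :=
          hρ2 x0 y (ι x0) (ι y) hxy ha (hι x0) (hι y)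
        have hle : ρ x0 y ≤ R := hR x0 hx0 y hy
        rw [h2] at hle
        have : (ι y : ℝ) ≤ R := by
          have := le_max_right (ι x0 : ℕ) (ι y)
          have h4 : (ι y : ℝ) ≤ (max (ι x0) (ι y) : ℕ) := by exact_mod_cast this
          push_cast at h4 hle ⊢
          linarith
        exact ⟨ι y, Or.inl (Nat.lt_succ_of_le (Nat.le_floor this)), hι y⟩
    exact Set.Finite.subset (Finset.finite_toSet _) hsub
end
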